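/- arXiv:2312.11543 — 6 statements merged into one kernel-verified Lean document; each statement's English description precedes it below -/
import Mathlib

section
/- Bondy–Chvátal (Chvátal degree-sequence) theorem: let G be a finite simple undirected graph on n ≥ 3 vertices, and let d₁ ≤ d₂ ≤ … ≤ dₙ be the ordered sequence of its vertex degrees. If for every integer k with 1 ≤ k < n/2 the implication (d_k ≤ k ⟹ d_{n−k} ≥ n − k) holds, then G is Hamiltonian. -/
open Finset SimpleGraph List

namespace BondyChvatal

variable {V : Type*} {n : ℕ} {G : SimpleGraph V}

private lemma congr_fmk (f : Fin n → V) {a b : ℕ} {ha : a < n} {hb : b < n} (h : a = b) :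
    f ⟨a, ha⟩ = f ⟨b, hb⟩ := by subst h; rfl

/-- Walk along `f m, f (m+1), ..., f (n-1)`. -/
def cycAux (G : SimpleGraph V) (f : Fin n → V)
    (hadj1 : ∀ i : ℕ, (h : i + 1 < n) → G.Adj (f ⟨i, by omega⟩) (f ⟨i + 1, h⟩))
    (m : ℕ) (hm : m < n) : G.Walk (f ⟨m, hm⟩) (f ⟨n - 1, by omega⟩) :=
  if h : m + 1 < n then Walk.cons (hadj1 m h) (cycAux G f hadj1 (m + 1) h)
  else Walk.nil.copy (congr_fmk f (by omega)) rfl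
  termination_by n - m

lemma cycAux_support (G : SimpleGraph V) (f : Fin n → V)
    (hadj1 : ∀ i : ℕ, (h : i + 1 < n) → G.Adj (f ⟨i, by omega⟩) (f ⟨i + 1, h⟩))
    (m : ℕ) (hm : m < n) :
    (cycAux G f hadj1 m hm).support
      = (List.range (n - m)).map (fun j => f ⟨(m + j) % n, Nat.mod_lt _ (by omega)⟩) := by
  rw [cycAux]
  by_cases h : m + 1 < n
  · rw [dif_pos h, Walk.support_cons, cycAux_support G f hadj1 (m+1) h]
    have hr : n - m = (n - (m+1)) + 1 := by omega
    rw [hr, List.range_succ_eq_map, List.map_cons, List.map_map]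
    congr 1
    · exact congr_fmk f (by rw [Nat.mod_eq_of_lt (by omega)]; omega)
    · apply List.map_congr_left
      intro j hj
      simp only [Function.comp_apply]
      exact congr_fmk f (by congr 1; omega)
  · rw [dif_neg h]
    have hr : n - m = 1 := by omega
    rw [hr]
    simp only [List.range_succ, List.range_zero, List.nil_append, List.map_cons, List.map_nil,
      Walk.support_copy, Walk.support_nil]
    congr 1
    exact congr_fmk f (by rw [Nat.mod_eq_of_lt (by omega)]; omega)
  termination_by n - m

lemma cycAux_edges (G : SimpleGraph V) (f : Fin n → V)
    (hadj1 : ∀ i : ℕ, (h : i + 1 < n) → G.Adj (f ⟨i, by omega⟩) (f ⟨i + 1, h⟩))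
    (m : ℕ) (hm : m < n) :
    (cycAux G f hadj1 m hm).edges
      = (List.range (n - 1 - m)).map (fun j =>
          s(f ⟨(m + j) % n, Nat.mod_lt _ (by omega)⟩, f ⟨(m + j + 1) % n, Nat.mod_lt _ (by omega)⟩)) := by
  rw [cycAux]
  by_cases h : m + 1 < n
  · rw [dif_pos h, Walk.edges_cons, cycAux_edges G f hadj1 (m+1) h]
    have hr : n - 1 - m = (n - 1 - (m+1)) + 1 := by omega
    rw [hr, List.range_succ_eq_map, List.map_cons, List.map_map]
    congr 1
    · refine congrArg₂ (fun x y => s(x, y)) ?_ ?_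
      · exact congr_fmk f (by rw [Nat.mod_eq_of_lt (by omega)]; omega)
      · exact congr_fmk f (by rw [Nat.mod_eq_of_lt (by omega)])
    · apply List.map_congr_left
      intro j hj
      simp only [Function.comp_apply]
      refine congrArg₂ (fun x y => s(x, y)) ?_ ?_
      · exact congr_fmk f (by congr 1; omega)
      · exact congr_fmk f (by congr 1; omega)
  · rw [dif_neg h]
    have hr : n - 1 - m = 0 := by omega
    rw [hr]
    simp [Walk.edges_copy]
  termination_by n - m


lemma isHamiltonian_of_cycleFun [Fintype V] [DecidableEq V] (hn3 : 3 ≤ n)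
    (hcard : Fintype.card V = n) (f : Fin n → V) (hf : Function.Bijective f)
    (hadj1 : ∀ i : ℕ, (h : i + 1 < n) → G.Adj (f ⟨i, by omega⟩) (f ⟨i + 1, h⟩))
    (hadj2 : G.Adj (f ⟨n - 1, by omega⟩) (f ⟨0, by omega⟩)) :
    G.IsHamiltonian := by
  have h0n : 0 < n := by omega
  set p := cycAux G f hadj1 0 h0n with hp
  have hsupp : p.support = (List.range n).map
      (fun j => f ⟨(0 + j) % n, Nat.mod_lt _ (by omega)⟩) := by
    rw [hp, cycAux_support G f hadj1 0 h0n, Nat.sub_zero]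
  have hmem : ∀ w : V, w ∈ p.support := by
    intro w
    obtain ⟨j, rfl⟩ := hf.surjective w
    rw [hsupp]
    refine List.mem_map.mpr ⟨j.val, List.mem_range.mpr j.isLt, ?_⟩
    have : (0 + j.val) % n = j.val := by rw [Nat.mod_eq_of_lt (by omega)]; omega
    exact (congr_fmk f this).trans (congrArg f (Fin.eta j j.isLt))
  have hnodup : p.support.Nodup := by
    rw [hsupp]
    refine List.Nodup.map_on ?_ List.nodup_range
    intro x hx y hy hxy
    rw [List.mem_range] at hx hy
    have ex : (0 + x) % n = x := by rw [Nat.mod_eq_of_lt (by omega)]; omega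
    have ey : (0 + y) % n = y := by rw [Nat.mod_eq_of_lt (by omega)]; omega
    have h2 := hf.injective hxy
    rw [Fin.mk.injEq] at h2
    rw [ex, ey] at h2
    exact h2
  have hpath : p.IsPath := Walk.IsPath.mk' hnodup
  have hedge : s(f ⟨n-1, by omega⟩, f ⟨0, by omega⟩) ∉ p.edges := by
    intro hmem'
    rw [hp, cycAux_edges G f hadj1 0 h0n, Nat.sub_zero] at hmem'
    obtain ⟨j, hj, hEq⟩ := List.mem_map.mp hmem'
    rw [List.mem_range] at hj
    have e1 : (0 + j) % n = j := by rw [Nat.mod_eq_of_lt (by omega)]; omega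
    have e2 : (0 + j + 1) % n = j + 1 := by rw [Nat.mod_eq_of_lt (by omega)]; omega
    rcases Sym2.eq_iff.mp hEq with ⟨h1, h2⟩ | ⟨h1, h2⟩
    · have c1 := hf.injective h1
      rw [Fin.mk.injEq] at c1
      rw [e1] at c1
      omega
    · have c1 := hf.injective h1
      have c2 := hf.injective h2
      rw [Fin.mk.injEq] at c1 c2
      rw [e1] at c1
      rw [e2] at c2
      omega
  have hcyc : (Walk.cons hadj2 p).IsCycle := (Walk.cons_isCycle_iff p hadj2).mpr ⟨hpath, hedge⟩
  intro hone
  refine ⟨f ⟨n-1, by omega⟩, Walk.cons hadj2 p, ?_⟩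
  rw [Walk.isHamiltonianCycle_iff_isCycle_and_support_count_tail_eq_one]
  refine ⟨hcyc, ?_⟩
  intro a
  rw [Walk.support_cons, List.tail_cons]
  exact List.count_eq_one_of_mem hnodup (hmem a)


private lemma getElem_idx_congr (l : List V) {i j : ℕ} (hi : i < l.length) (hj : j < l.length)
    (h : i = j) : l[i]'hi = l[j]'hj := by subst h; rfl

lemma cycleFun_of_isHamiltonian [Fintype V] [DecidableEq V] (hn3 : 3 ≤ n)
    (hcard : Fintype.card V = n) (hH : G.IsHamiltonian) :
    ∃ f : Fin n → V, Function.Bijective f ∧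
      (∀ i : ℕ, (h : i + 1 < n) → G.Adj (f ⟨i, by omega⟩) (f ⟨i + 1, h⟩)) ∧
      G.Adj (f ⟨n - 1, by omega⟩) (f ⟨0, by omega⟩) := by
  obtain ⟨a, p, hp⟩ := hH (by omega)
  have hnil : ¬ p.Nil := hp.isCycle.not_nil
  have hlen : p.support.length = n + 1 := by
    rw [Walk.length_support, hp.length_eq, hcard]
  set t : List V := p.support.tail with ht
  have tlen : t.length = n := by
    rw [ht, List.length_tail, hlen]; omega
  have tnodup : t.Nodup := hp.isCycle.support_nodup
  have tmem : ∀ w : V, w ∈ t := by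
    intro w
    have := hp.isHamiltonian_tail.mem_support w
    rwa [Walk.support_tail_of_not_nil p hnil] at this
  set f : Fin n → V := fun i => t.get (Fin.cast tlen.symm i) with hfdef
  have hinj : Function.Injective f := by
    intro x y hxy
    have := List.nodup_iff_injective_get.mp tnodup hxy
    simpa [Fin.ext_iff] using this
  have hbij : Function.Bijective f :=
    (Fintype.bijective_iff_injective_and_card f).mpr ⟨hinj, by simp [hcard]⟩
  have key : ∀ (i : ℕ) (hi : i < n), t.get ⟨i, by omega⟩ = p.support[i+1]'(by omega) := by
    intro i hi
    rw [List.get_eq_getElem]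
    exact List.getElem_tail (by simp only [List.length_tail, hlen, Fin.val_mk]; omega)
  have hchain := List.isChain_iff_getElem.mp p.isChain_adj_support
  have hchain' : ∀ (i : ℕ) (h : i + 1 < n + 1),
      G.Adj (p.support[i]'(by omega)) (p.support[i+1]'(by omega)) := by
    intro i h
    have hc := hchain i (by omega)
    simpa [List.get_eq_getElem] using hc
  have cons_eq := p.support_eq_cons
  have h0 : p.support[0]'(by omega) = a := by
    rw [List.getElem_of_eq cons_eq (by omega)]
    rfl
  have hlastel : p.support[n]'(by omega) = a := by
    have h2 := p.getLast_support
    rw [List.getLast_eq_getElem] at h2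
    rw [getElem_idx_congr p.support (by omega) (by omega) (by omega : n = p.support.length - 1)]
    exact h2
  refine ⟨f, hbij, ?_, ?_⟩
  · intro i hi
    show G.Adj (t.get ⟨i, by omega⟩) (t.get ⟨i+1, by omega⟩)
    rw [key i (by omega), key (i+1) (by omega)]
    exact hchain' (i+1) (by omega)
  · show G.Adj (t.get ⟨n-1, by omega⟩) (t.get ⟨0, by omega⟩)
    rw [key (n-1) (by omega), key 0 (by omega)]
    rw [getElem_idx_congr p.support (by omega) (by omega) (by omega : n - 1 + 1 = n)]
    rw [hlastel]
    have hcc := hchain' 0 (by omega)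
    rw [h0] at hcc
    exact hcc


section counting

variable [Fintype V]

lemma filter_card_equiv {p : ℕ → Prop} [DecidablePred p] (D : V → ℕ) (e : Fin n → ℕ)
    (ρ : V ≃ Fin n) (hρ : ∀ v, e (ρ v) = D v) :
    (Finset.univ.filter fun v => p (D v)).card
      = (Finset.univ.filter fun j => p (e j)).card := by
  apply Finset.card_bij (fun v _ => ρ v)
  · intro a ha
    rw [Finset.mem_filter] at *
    exact ⟨Finset.mem_univ _, by rw [hρ a]; exact ha.2⟩
  · intro a _ b _ hab
    exact ρ.injective hab
  · intro j hj
    rw [Finset.mem_filter] at hj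
    refine ⟨ρ.symm j, ?_, by simp⟩
    rw [Finset.mem_filter]
    refine ⟨Finset.mem_univ _, ?_⟩
    rw [← hρ (ρ.symm j)]
    simpa using hj.2

lemma sorted_nth_le (e : Fin n → ℕ) (he : Monotone e) (D : V → ℕ)
    (ρ : V ≃ Fin n) (hρ : ∀ v, e (ρ v) = D v) {m c : ℕ} (hm1 : 1 ≤ m) (hmn : m - 1 < n)
    (hcount : m ≤ (Finset.univ.filter fun v => D v ≤ c).card) :
    e ⟨m - 1, hmn⟩ ≤ c := by
  rw [filter_card_equiv (p := fun x => x ≤ c) D e ρ hρ] at hcount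
  by_contra hlt
  push_neg at hlt
  have hsub : (Finset.univ.filter fun j : Fin n => e j ≤ c) ⊆ Finset.Iio ⟨m-1, hmn⟩ := by
    intro j hj
    rw [Finset.mem_filter] at hj
    rw [Finset.mem_Iio]
    by_contra hge
    push_neg at hge
    exact absurd (le_trans (he hge) hj.2) (not_le.mpr hlt)
  have := Finset.card_le_card hsub
  rw [Fin.card_Iio] at this
  have hv : ((⟨m - 1, hmn⟩ : Fin n) : ℕ) = m - 1 := rfl
  rw [hv] at this
  omega

lemma sorted_count_ge (e : Fin n → ℕ) (he : Monotone e) (D : V → ℕ)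
    (ρ : V ≃ Fin n) (hρ : ∀ v, e (ρ v) = D v) (i : Fin n) :
    n - i.val ≤ (Finset.univ.filter fun v => e i ≤ D v).card := by
  rw [filter_card_equiv (p := fun x => e i ≤ x) D e ρ hρ]
  have hsub : Finset.Ici i ⊆ (Finset.univ.filter fun j : Fin n => e i ≤ e j) := by
    intro j hj
    rw [Finset.mem_Ici] at hj
    rw [Finset.mem_filter]
    exact ⟨Finset.mem_univ _, he hj⟩
  have := Finset.card_le_card hsub
  rwa [Fin.card_Ici] at this

lemma sorted_count_le (e : Fin n → ℕ) (he : Monotone e) (D : V → ℕ)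
    (ρ : V ≃ Fin n) (hρ : ∀ v, e (ρ v) = D v) (i : Fin n) :
    i.val + 1 ≤ (Finset.univ.filter fun v => D v ≤ e i).card := by
  rw [filter_card_equiv (p := fun x => x ≤ e i) D e ρ hρ]
  have hsub : Finset.Iic i ⊆ (Finset.univ.filter fun j : Fin n => e j ≤ e i) := by
    intro j hj
    rw [Finset.mem_Iic] at hj
    rw [Finset.mem_filter]
    exact ⟨Finset.mem_univ _, he hj⟩
  have := Finset.card_le_card hsub
  rwa [Fin.card_Iic] at this

lemma sorted_dominates (e e' : Fin n → ℕ) (he : Monotone e) (he' : Monotone e')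
    (D D' : V → ℕ) (ρ ρ' : V ≃ Fin n) (hρ : ∀ v, e (ρ v) = D v) (hρ' : ∀ v, e' (ρ' v) = D' v)
    (hDD' : ∀ v, D v ≤ D' v) (i : Fin n) : e i ≤ e' i := by
  have h1 : i.val + 1 ≤ (Finset.univ.filter fun v => D v ≤ e' i).card := by
    refine le_trans (sorted_count_le e' he' D' ρ' hρ' i) (Finset.card_le_card ?_)
    intro v hv
    rw [Finset.mem_filter] at hv ⊢
    exact ⟨Finset.mem_univ _, le_trans (hDD' v) hv.2⟩
  have h2 := sorted_nth_le e he D ρ hρ (m := i.val + 1) (by omega) (by omega) h1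
  have : (⟨i.val + 1 - 1, by omega⟩ : Fin n) = i := by
    ext; simp
  rwa [this] at h2

end counting


lemma crossing [Fintype V] [DecidableEq V] {H : SimpleGraph V} [DecidableRel H.Adj]
    (hn3 : 3 ≤ n) (hcard : Fintype.card V = n)
    (g : Fin n → V) (hg : Function.Bijective g)
    (hpath : ∀ i : ℕ, (h : i + 1 < n) → H.Adj (g ⟨i, by omega⟩) (g ⟨i + 1, h⟩))
    (hab : ¬ H.Adj (g ⟨0, by omega⟩) (g ⟨n - 1, by omega⟩))
    (hdeg : n ≤ H.degree (g ⟨0, by omega⟩) + H.degree (g ⟨n - 1, by omega⟩)) :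
    H.IsHamiltonian := by
  have hn0 : 0 < n := by omega
  set g' : ℕ → V := fun i => g ⟨i % n, Nat.mod_lt _ hn0⟩ with hg'
  have g'eq : ∀ (i : ℕ) (h : i < n), g' i = g ⟨i, h⟩ := fun i h =>
    congr_fmk g (Nat.mod_eq_of_lt h)
  set a : V := g ⟨0, hn0⟩ with hadef
  set b : V := g ⟨n - 1, by omega⟩ with hbdef
  have hne : a ≠ b := by
    intro hEq
    have := hg.injective hEq
    rw [Fin.mk.injEq] at this
    omega
  set S : Finset ℕ := (Finset.range (n-1)).filter (fun i => H.Adj a (g' (i+1))) with hS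
  set T : Finset ℕ := (Finset.range (n-1)).filter (fun i => H.Adj b (g' i)) with hT
  have cardS : S.card = H.degree a := by
    rw [SimpleGraph.degree]
    apply Finset.card_bij (fun i _ => g' (i+1))
    · intro i hi
      rw [hS, Finset.mem_filter] at hi
      rw [SimpleGraph.mem_neighborFinset]
      exact hi.2
    · intro x hx y hy hxy
      rw [hS, Finset.mem_filter, Finset.mem_range] at hx hy
      have := hg.injective hxy
      rw [Fin.mk.injEq] at this
      rw [Nat.mod_eq_of_lt (by omega), Nat.mod_eq_of_lt (by omega)] at this
      omega
    · intro w hw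
      rw [SimpleGraph.mem_neighborFinset] at hw
      obtain ⟨j, rfl⟩ := hg.surjective w
      have hj0 : j.val ≠ 0 := by
        intro hEq
        have hj : j = ⟨0, hn0⟩ := Fin.ext hEq
        rw [hj] at hw
        exact H.irrefl hw
      have hjn : j.val ≠ n - 1 := by
        intro hEq
        have hj : j = ⟨n - 1, by omega⟩ := Fin.ext hEq
        rw [hj] at hw
        exact hab hw
      refine ⟨j.val - 1, ?_, ?_⟩
      · rw [hS, Finset.mem_filter, Finset.mem_range]
        constructor
        · have := j.isLt; omega
        · have : g' (j.val - 1 + 1) = g j := by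
            rw [g'eq _ (by have := j.isLt; omega)]
            exact congrArg g (Fin.ext (by simp; omega))
          rw [this]
          exact hw
      · rw [g'eq _ (by have := j.isLt; omega)]
        exact congrArg g (Fin.ext (by simp; omega))
  have cardT : T.card = H.degree b := by
    rw [SimpleGraph.degree]
    apply Finset.card_bij (fun i _ => g' i)
    · intro i hi
      rw [hT, Finset.mem_filter] at hi
      rw [SimpleGraph.mem_neighborFinset]
      exact hi.2
    · intro x hx y hy hxy
      rw [hT, Finset.mem_filter, Finset.mem_range] at hx hy
      have := hg.injective hxy
      rw [Fin.mk.injEq] at this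
      rw [Nat.mod_eq_of_lt (by omega), Nat.mod_eq_of_lt (by omega)] at this
      omega
    · intro w hw
      rw [SimpleGraph.mem_neighborFinset] at hw
      obtain ⟨j, rfl⟩ := hg.surjective w
      have hjn : j.val ≠ n - 1 := by
        intro hEq
        have hj : j = ⟨n - 1, by omega⟩ := Fin.ext hEq
        rw [hj] at hw
        exact H.irrefl hw
      refine ⟨j.val, ?_, ?_⟩
      · rw [hT, Finset.mem_filter, Finset.mem_range]
        refine ⟨by have := j.isLt; omega, ?_⟩
        have : g' j.val = g j := by
          rw [g'eq _ j.isLt]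
        rw [this]
        exact hw
      · rw [g'eq _ j.isLt]
  -- pigeonhole
  have hunion : (S ∪ T).card ≤ n - 1 := by
    have : S ∪ T ⊆ Finset.range (n-1) := by
      intro x hx
      rcases Finset.mem_union.mp hx with h | h
      · exact Finset.mem_of_mem_filter x h
      · exact Finset.mem_of_mem_filter x h
    simpa using Finset.card_le_card this
  have hinter : (S ∩ T).Nonempty := by
    rw [← Finset.card_pos]
    have := Finset.card_union_add_card_inter S T
    omega
  obtain ⟨i, hiST⟩ := hinter
  rw [Finset.mem_inter, hS, hT, Finset.mem_filter, Finset.mem_filter, Finset.mem_range] at hiST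
  obtain ⟨⟨hilt, hSadj⟩, _, hTadj⟩ := hiST
  have hi1 : 1 ≤ i := by
    rcases Nat.eq_zero_or_pos i with rfl | h
    · exfalso
      apply hab
      have : g' 0 = a := g'eq 0 hn0
      rw [this] at hTadj
      exact hTadj.symm
    · exact h
  -- build the new Hamiltonian cycle
  set f : Fin n → V := fun j => if j.val ≤ i then g j
      else g ⟨(n + i - j.val) % n, Nat.mod_lt _ hn0⟩ with hf
  have fval1 : ∀ (j : ℕ) (hj : j < n), j ≤ i → f ⟨j, hj⟩ = g ⟨j, hj⟩ := by
    intro j hj hji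
    rw [hf]
    exact if_pos hji
  have fval2 : ∀ (j : ℕ) (hj : j < n) (hji : i < j), f ⟨j, hj⟩ = g ⟨n + i - j, by omega⟩ := by
    intro j hj hji
    rw [hf]
    refine (if_neg (show ¬ (j ≤ i) by omega)).trans (congr_fmk g ?_)
    show (n + i - j) % n = n + i - j
    rw [Nat.mod_eq_of_lt (by omega)]
  have hfinj : Function.Injective f := by
    intro x y hxy
    have hxlt := x.isLt
    have hylt := y.isLt
    by_cases hx : x.val ≤ i <;> by_cases hy : y.val ≤ i
    · have ex : f x = g ⟨x.val, hxlt⟩ := fval1 x.val hxlt hx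
      have ey : f y = g ⟨y.val, hylt⟩ := fval1 y.val hylt hy
      rw [ex, ey] at hxy
      have := hg.injective hxy
      rw [Fin.mk.injEq] at this
      exact Fin.ext this
    · have ex : f x = g ⟨x.val, hxlt⟩ := fval1 x.val hxlt hx
      have ey : f y = g ⟨n + i - y.val, by omega⟩ := fval2 y.val hylt (by omega)
      rw [ex, ey] at hxy
      have := hg.injective hxy
      rw [Fin.mk.injEq] at this
      exact absurd this (by omega)
    · have ex : f x = g ⟨n + i - x.val, by omega⟩ := fval2 x.val hxlt (by omega)
      have ey : f y = g ⟨y.val, hylt⟩ := fval1 y.val hylt hy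
      rw [ex, ey] at hxy
      have := hg.injective hxy
      rw [Fin.mk.injEq] at this
      exact absurd this (by omega)
    · have ex : f x = g ⟨n + i - x.val, by omega⟩ := fval2 x.val hxlt (by omega)
      have ey : f y = g ⟨n + i - y.val, by omega⟩ := fval2 y.val hylt (by omega)
      rw [ex, ey] at hxy
      have := hg.injective hxy
      rw [Fin.mk.injEq] at this
      exact Fin.ext (by omega)
  have hfbij : Function.Bijective f :=
    (Fintype.bijective_iff_injective_and_card f).mpr ⟨hfinj, by simp [hcard]⟩
  have hfadj1 : ∀ (m : ℕ) (h : m + 1 < n), H.Adj (f ⟨m, by omega⟩) (f ⟨m + 1, h⟩) := by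
    intro m h
    rcases lt_trichotomy m i with hmi | rfl | hmi
    · rw [fval1 m (by omega) (by omega), fval1 (m+1) (by omega) (by omega)]
      exact hpath m h
    · rw [fval1 m (by omega) (by omega), fval2 (m+1) (by omega) (by omega)]
      have e1 : g (⟨m, by omega⟩ : Fin n) = g' m := (g'eq m (by omega)).symm
      have e2 : g (⟨n + m - (m+1), by omega⟩ : Fin n) = b := by
        rw [hbdef]
        exact congr_fmk g (by omega)
      rw [e1, e2]
      exact hTadj.symm
    · rw [fval2 m (by omega) (by omega), fval2 (m+1) (by omega) (by omega)]
      have hp := hpath (n + i - m - 1) (by omega)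
      have e1 : g (⟨n + i - m, by omega⟩ : Fin n) = g ⟨n + i - m - 1 + 1, by omega⟩ :=
        congr_fmk g (by omega)
      have e2 : g (⟨n + i - (m+1), by omega⟩ : Fin n) = g ⟨n + i - m - 1, by omega⟩ :=
        congr_fmk g (by omega)
      rw [e1, e2]
      exact hp.symm
  have hfadj2 : H.Adj (f ⟨n - 1, by omega⟩) (f ⟨0, by omega⟩) := by
    rw [fval2 (n-1) (by omega) (by omega), fval1 0 (by omega) (by omega)]
    have e1 : g (⟨n + i - (n - 1), by omega⟩ : Fin n) = g' (i + 1) := by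
      rw [g'eq (i+1) (by omega)]
      exact congr_fmk g (by omega)
    rw [e1]
    exact hSadj.symm
  exact isHamiltonian_of_cycleFun hn3 hcard f hfbij hfadj1 hfadj2


private lemma mod_cancel {n s t : ℕ} (hn : 0 < n) (ht : 0 < t) (ht2 : t < n) :
    (s + t) % n ≠ s % n := by
  intro h
  rw [Nat.add_mod] at h
  have hu : s % n < n := Nat.mod_lt _ hn
  have htm : t % n = t := Nat.mod_eq_of_lt ht2
  rw [htm] at h
  by_cases hc : s % n + t < n
  · rw [Nat.mod_eq_of_lt hc] at h
    omega
  · have h2 : s % n + t - n < n := by omega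
    have h3 : (s % n + t) % n = s % n + t - n := by
      rw [Nat.mod_eq_sub_mod (by omega), Nat.mod_eq_of_lt h2]
    omega

lemma degree_mono [Fintype V] {G H : SimpleGraph V} [DecidableRel G.Adj] [DecidableRel H.Adj]
    (hGH : G ≤ H) (v : V) : G.degree v ≤ H.degree v := by
  apply Finset.card_le_card
  intro w hw
  rw [SimpleGraph.mem_neighborFinset] at hw ⊢
  exact hGH hw

lemma degree_sum_lt [Fintype V] [DecidableEq V] {H : SimpleGraph V} [DecidableRel H.Adj]
    (hn3 : 3 ≤ n) (hcard : Fintype.card V = n) (hHham : ¬ H.IsHamiltonian)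
    (a b : V) (hab : a ≠ b) (hnadj : ¬ H.Adj a b)
    (hadd : (H ⊔ SimpleGraph.fromEdgeSet {s(a,b)}).IsHamiltonian) :
    H.degree a + H.degree b < n := by
  by_contra hge
  push_neg at hge
  obtain ⟨f, hfbij, hfadj1, hfadj2⟩ := cycleFun_of_isHamiltonian hn3 hcard hadd
  have hn0 : 0 < n := by omega
  set F : ℕ → V := fun m => f ⟨m % n, Nat.mod_lt _ hn0⟩ with hF
  have hFeq : ∀ (m : ℕ) (hm : m < n), F m = f ⟨m, hm⟩ := fun m hm =>
    congr_fmk f (Nat.mod_eq_of_lt hm)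
  have FF : ∀ x y : ℕ, F x = F y → x % n = y % n := by
    intro x y hxy
    have := hfbij.injective hxy
    rwa [Fin.mk.injEq] at this
  have hFadj : ∀ m : ℕ, m < n →
      (H ⊔ SimpleGraph.fromEdgeSet {s(a,b)}).Adj (F m) (F (m+1)) := by
    intro m hm
    by_cases h : m + 1 < n
    · rw [hFeq m hm, hFeq (m+1) h]
      exact hfadj1 m h
    · have e0 : F (m+1) = f ⟨0, by omega⟩ := by
        rw [hF]
        refine congr_fmk f ?_
        have hmn : m + 1 = n := by omega
        rw [hmn, Nat.mod_self]
      rw [hFeq m hm, e0]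
      have e1 : f ⟨m, hm⟩ = f ⟨n-1, by omega⟩ := congr_fmk f (by omega)
      rw [e1]
      exact hfadj2
  have hABmem : ∀ x y : V, (H ⊔ SimpleGraph.fromEdgeSet {s(a,b)}).Adj x y → ¬ H.Adj x y →
      (x = a ∧ y = b) ∨ (x = b ∧ y = a) := by
    intro x y hxy hnxy
    rw [SimpleGraph.sup_adj, SimpleGraph.fromEdgeSet_adj, Set.mem_singleton_iff] at hxy
    rcases hxy with h | ⟨h, _⟩
    · exact absurd h hnxy
    · exact Sym2.eq_iff.mp h
  have hmiss : ∃ s : ℕ, s < n ∧ ¬ H.Adj (F s) (F (s+1)) := by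
    by_contra hall
    push_neg at hall
    apply hHham
    apply isHamiltonian_of_cycleFun hn3 hcard f hfbij
    · intro i hi
      have := hall i (by omega)
      rwa [hFeq i (by omega), hFeq (i+1) hi] at this
    · have := hall (n-1) (by omega)
      rw [hFeq (n-1) (by omega)] at this
      have e0 : F (n-1+1) = f ⟨0, hn0⟩ := by
        rw [hF]
        refine congr_fmk f ?_
        have hmn : n - 1 + 1 = n := by omega
        rw [hmn, Nat.mod_self]
      rwa [e0] at this
  obtain ⟨s, hs, hmiss⟩ := hmiss
  have hedge := hABmem _ _ (hFadj s hs) hmiss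
  have hdegs : n ≤ H.degree (F (s+1)) + H.degree (F s) := by
    rcases hedge with ⟨h1, h2⟩ | ⟨h1, h2⟩ <;> rw [h1, h2] <;> omega
  have hnadj2 : ¬ H.Adj (F (s+1)) (F s) := fun hAdj => hmiss hAdj.symm
  haveI : NeZero n := ⟨by omega⟩
  set c : Fin n := ⟨(s+1) % n, Nat.mod_lt _ hn0⟩ with hc
  set g : Fin n → V := fun j => f (c + j) with hgdef
  have hgbij : Function.Bijective g := hfbij.comp (Equiv.addLeft c).bijective
  have hgval : ∀ (j : ℕ) (hj : j < n), g ⟨j, hj⟩ = F (s + 1 + j) := by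
    intro j hj
    show f (c + ⟨j, hj⟩) = f ⟨(s+1+j) % n, Nat.mod_lt _ hn0⟩
    refine congrArg f (Fin.ext ?_)
    show (c + ⟨j,hj⟩).val = (s+1+j) % n
    rw [Fin.val_add]
    show ((s+1) % n + j) % n = (s+1+j) % n
    rw [Nat.mod_add_mod]
  have hg0 : g ⟨0, hn0⟩ = F (s+1) := hgval 0 hn0
  have hgn : g ⟨n-1, by omega⟩ = F s := by
    rw [hgval (n-1) (by omega), hF]
    refine congr_fmk f ?_
    have e : s + 1 + (n-1) = s + n := by omega
    rw [e, Nat.add_mod_right]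
  have hgpath : ∀ (j : ℕ) (h : j + 1 < n), H.Adj (g ⟨j, by omega⟩) (g ⟨j+1, h⟩) := by
    intro j hjn
    rw [hgval j (by omega), hgval (j+1) hjn]
    have hm : (s + 1 + j) % n < n := Nat.mod_lt _ hn0
    have hadj := hFadj ((s+1+j) % n) hm
    have e1 : F ((s+1+j) % n) = F (s+1+j) := by
      rw [hF]
      exact congr_fmk f (Nat.mod_mod_of_dvd _ dvd_rfl)
    have e2 : F ((s+1+j) % n + 1) = F (s+1+j+1) := by
      rw [hF]
      exact congr_fmk f (by rw [Nat.mod_add_mod])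
    rw [e1, e2] at hadj
    have e3 : s + 1 + (j + 1) = s + 1 + j + 1 := by omega
    rw [e3]
    by_cases hHadj : H.Adj (F (s+1+j)) (F (s+1+j+1))
    · exact hHadj
    · exfalso
      have hed2 := hABmem _ _ hadj hHadj
      have key : (F (s+1+j) = F s ∧ F (s+1+j+1) = F (s+1)) ∨
          (F (s+1+j) = F (s+1) ∧ F (s+1+j+1) = F s) := by
        rcases hedge with ⟨e1', e2'⟩ | ⟨e1', e2'⟩ <;> rcases hed2 with ⟨f1, f2⟩ | ⟨f1, f2⟩
        · exact Or.inl ⟨f1.trans e1'.symm, f2.trans e2'.symm⟩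
        · exact Or.inr ⟨f1.trans e2'.symm, f2.trans e1'.symm⟩
        · exact Or.inr ⟨f1.trans e2'.symm, f2.trans e1'.symm⟩
        · exact Or.inl ⟨f1.trans e1'.symm, f2.trans e2'.symm⟩
      rcases key with ⟨k1, k2⟩ | ⟨k1, k2⟩
      · have m1 := FF _ _ k1
        exact mod_cancel hn0 (show 0 < j + 1 by omega) (by omega)
          (by rw [show s + (j+1) = s+1+j from by omega]; exact m1)
      · rcases Nat.eq_zero_or_pos j with rfl | hj0
        · have m2 := FF _ _ k2
          exact mod_cancel hn0 (show (0:ℕ) < 2 by omega) (by omega)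
            (by rw [show s + 2 = s+1+0+1 from by omega]; exact m2)
        · have m1 := FF _ _ k1
          exact mod_cancel hn0 hj0 (by omega)
            (by rw [show s + 1 + j = (s+1)+j from by omega]; exact m1)
  apply hHham
  apply crossing hn3 hcard g hgbij hgpath
  · rw [hg0, hgn]
    exact hnadj2
  · rw [hg0, hgn]
    omega

lemma full_degree_adj [Fintype V] [DecidableEq V] {H : SimpleGraph V} [DecidableRel H.Adj]
    (hcard : Fintype.card V = n) (w v : V) (hwv : w ≠ v) (hdeg : n - 1 ≤ H.degree w) :
    H.Adj w v := by
  have hsub : H.neighborFinset w ⊆ Finset.univ.erase w := by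
    intro x hx
    rw [SimpleGraph.mem_neighborFinset] at hx
    exact Finset.mem_erase.mpr ⟨(H.ne_of_adj hx).symm, Finset.mem_univ _⟩
  have hcard' : (Finset.univ.erase w).card = n - 1 := by
    rw [Finset.card_erase_of_mem (Finset.mem_univ _), Finset.card_univ, hcard]
  have heq : H.neighborFinset w = Finset.univ.erase w := by
    apply Finset.eq_of_subset_of_card_le hsub
    rw [hcard']
    exact hdeg
  have : v ∈ H.neighborFinset w := by
    rw [heq]
    exact Finset.mem_erase.mpr ⟨hwv.symm, Finset.mem_univ _⟩
  rwa [SimpleGraph.mem_neighborFinset] at this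

set_option maxHeartbeats 1000000 in
lemma final_step [Fintype V] [DecidableEq V] {H : SimpleGraph V} [DecidableRel H.Adj]
    (hn3 : 3 ≤ n) (hcard : Fintype.card V = n)
    (e' : Fin n → ℕ) (he' : Monotone e') (ρ' : V ≃ Fin n) (hρ' : ∀ v, e' (ρ' v) = H.degree v)
    (hcond : ∀ k : ℕ, (hk1 : 1 ≤ k) → (hk2 : 2 * k < n) →
      e' ⟨k - 1, by omega⟩ ≤ k → n - k ≤ e' ⟨n - k - 1, by omega⟩)
    (a b : V) (hab : a ≠ b) (hnadj : ¬ H.Adj a b) (hdegab : H.degree a ≤ H.degree b)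
    (hmaxP : ∀ x y : V, x ≠ y → ¬ H.Adj x y →
      H.degree x + H.degree y ≤ H.degree a + H.degree b)
    (hsum : ∀ x y : V, x ≠ y → ¬ H.Adj x y → H.degree x + H.degree y < n) :
    False := by
  set k := H.degree a with hk
  have hsumab : H.degree a + H.degree b < n := hsum a b hab hnadj
  rcases Nat.eq_zero_or_pos k with hk0 | hk1
  · -- degree-zero vertex case
    have hd1 : e' ⟨0, by omega⟩ ≤ 1 := by
      apply sorted_nth_le e' he' (fun v => H.degree v) ρ' hρ' (m := 1) (c := 1) le_rfl (by omega)
      rw [Nat.succ_le_iff, Finset.card_pos]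
      exact ⟨a, Finset.mem_filter.mpr ⟨Finset.mem_univ _, by omega⟩⟩
    have hcc := hcond 1 le_rfl (by omega) hd1
    have hhi : 2 ≤ (Finset.univ.filter fun v => n - 1 ≤ H.degree v).card := by
      have h1 := sorted_count_ge e' he' (fun v => H.degree v) ρ' hρ' ⟨n - 1 - 1, by omega⟩
      have h2 : (Finset.univ.filter fun v => e' ⟨n-1-1, by omega⟩ ≤ H.degree v)
          ⊆ (Finset.univ.filter fun v => n - 1 ≤ H.degree v) := by
        intro v hv
        rw [Finset.mem_filter] at hv ⊢
        exact ⟨Finset.mem_univ _, le_trans hcc hv.2⟩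
      have h3 := Finset.card_le_card h2
      have h1' : n - (n - 1 - 1)
          ≤ (Finset.univ.filter fun v => e' ⟨n-1-1, by omega⟩ ≤ H.degree v).card := h1
      have h4 : n - (n - 1 - 1) = 2 := by omega
      omega
    obtain ⟨w, hwmem, hwa⟩ := Finset.exists_mem_ne
      (s := Finset.univ.filter fun v => n - 1 ≤ H.degree v) (by omega) a
    rw [Finset.mem_filter] at hwmem
    have hadj := full_degree_adj hcard w a hwa hwmem.2
    have : 1 ≤ H.degree a := by
      rw [SimpleGraph.degree]
      rw [Nat.succ_le_iff, Finset.card_pos]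
      exact ⟨w, (SimpleGraph.mem_neighborFinset _ _ _).mpr hadj.symm⟩
    omega
  · -- main case
    have h2k : 2 * k < n := by omega
    -- many low-degree vertices
    have hW : k ≤ (Finset.univ.filter fun v => H.degree v ≤ k).card := by
      have hWsub : (Finset.univ.filter fun w => ¬ H.Adj b w ∧ w ≠ b)
          ⊆ (Finset.univ.filter fun v => H.degree v ≤ k) := by
        intro w hw
        rw [Finset.mem_filter] at hw ⊢
        obtain ⟨-, hw1, hw2⟩ := hw
        refine ⟨Finset.mem_univ _, ?_⟩
        have := hmaxP w b hw2 (fun hAdj => hw1 hAdj.symm)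
        omega
      have hWeq : (Finset.univ.filter fun w => ¬ H.Adj b w ∧ w ≠ b)
          = (insert b (H.neighborFinset b))ᶜ := by
        ext w
        rw [Finset.mem_filter, Finset.mem_compl, Finset.mem_insert,
          SimpleGraph.mem_neighborFinset]
        constructor
        · rintro ⟨-, h1, h2⟩ (h | h)
          · exact h2 h
          · exact h1 h
        · intro hcon
          push_neg at hcon
          exact ⟨Finset.mem_univ _, hcon.2, hcon.1⟩
      have hbnotin : b ∉ H.neighborFinset b := by
        rw [SimpleGraph.mem_neighborFinset]
        exact H.irrefl
      have hWcard : (Finset.univ.filter fun w => ¬ H.Adj b w ∧ w ≠ b).card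
          = n - 1 - H.degree b := by
        rw [hWeq, Finset.card_compl, Finset.card_insert_of_notMem hbnotin]
        have hnb : (H.neighborFinset b).card = H.degree b := rfl
        rw [hnb, hcard]
        omega
      have := Finset.card_le_card hWsub
      omega
    have hlow : e' ⟨k - 1, by omega⟩ ≤ k :=
      sorted_nth_le e' he' (fun v => H.degree v) ρ' hρ' hk1 (by omega) hW
    have hhigh := hcond k hk1 h2k hlow
    -- many high-degree vertices
    have hHi : k + 1 ≤ (Finset.univ.filter fun v => n - k ≤ H.degree v).card := by
      have h1 := sorted_count_ge e' he' (fun v => H.degree v) ρ' hρ' ⟨n - k - 1, by omega⟩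
      have h2 : (Finset.univ.filter fun v => e' ⟨n-k-1, by omega⟩ ≤ H.degree v)
          ⊆ (Finset.univ.filter fun v => n - k ≤ H.degree v) := by
        intro v hv
        rw [Finset.mem_filter] at hv ⊢
        exact ⟨Finset.mem_univ _, le_trans hhigh hv.2⟩
      have h3 := Finset.card_le_card h2
      have h1' : n - (n - k - 1)
          ≤ (Finset.univ.filter fun v => e' ⟨n-k-1, by omega⟩ ≤ H.degree v).card := h1
      have h4 : n - (n - k - 1) = k + 1 := by omega
      omega
    -- pick a high-degree vertex not adjacent to a and distinct from a
    have hane : (Finset.univ.filter (fun v => n - k ≤ H.degree v) \ H.neighborFinset a).Nonempty := by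
      rw [← Finset.card_pos]
      have h5 := Finset.le_card_sdiff (H.neighborFinset a)
        (Finset.univ.filter (fun v => n - k ≤ H.degree v))
      have h6 : (H.neighborFinset a).card = k := rfl
      omega
    obtain ⟨w, hwmem⟩ := hane
    rw [Finset.mem_sdiff, Finset.mem_filter, SimpleGraph.mem_neighborFinset] at hwmem
    obtain ⟨⟨-, hw1⟩, hw2⟩ := hwmem
    have hwa : a ≠ w := by
      intro hEq
      rw [← hEq] at hw1
      omega
    have := hmaxP a w hwa hw2
    omega

end BondyChvatal

open BondyChvatal in
set_option maxHeartbeats 1000000 in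
/-- Bondy–Chvátal (Chvátal degree-sequence) theorem: let `G` be a finite simple
undirected graph on `n ≥ 3` vertices with ordered degree sequence
`d₁ ≤ d₂ ≤ … ≤ dₙ`. If for every `k` with `1 ≤ k < n / 2` we have
`d_k ≤ k → d_{n-k} ≥ n - k`, then `G` is Hamiltonian. -/
theorem bondy_chvatal_theorem {V : Type*} [Fintype V] [DecidableEq V]
    (G : SimpleGraph V) [DecidableRel G.Adj] (n : ℕ)
    (hn : Fintype.card V = n) (h3 : 3 ≤ n)
    (d : Fin n → ℕ) (hmono : Monotone d)
    (σ : V ≃ Fin n) (hd : ∀ v : V, d (σ v) = G.degree v)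
    (h : ∀ k : ℕ, (hk1 : 1 ≤ k) → (hk2 : 2 * k < n) →
      d ⟨k - 1, by omega⟩ ≤ k → n - k ≤ d ⟨n - k - 1, by omega⟩) :
    G.IsHamiltonian := by
  by_contra hnotham
  classical
  set S : Set (SimpleGraph V) := {K | G ≤ K ∧ ¬ K.IsHamiltonian} with hSdef
  have hGS : G ∈ S := ⟨le_refl G, hnotham⟩
  obtain ⟨H, hHS, hmax⟩ := Set.Finite.exists_maximalFor
    (fun K : SimpleGraph V => K.edgeSet.ncard) S (Set.toFinite S) ⟨G, hGS⟩
  obtain ⟨hGH, hHham⟩ := hHS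
  letI : DecidableRel H.Adj := Classical.decRel _
  -- adding any missing edge makes H Hamiltonian
  have hmaxadd : ∀ a b : V, a ≠ b → ¬ H.Adj a b →
      (H ⊔ SimpleGraph.fromEdgeSet {s(a,b)}).IsHamiltonian := by
    intro a b hab hnadj
    by_contra hham'
    have hAdj : (H ⊔ SimpleGraph.fromEdgeSet {s(a,b)}).Adj a b := by
      rw [SimpleGraph.sup_adj, SimpleGraph.fromEdgeSet_adj]
      exact Or.inr ⟨Set.mem_singleton _, hab⟩
    have hlt : H < H ⊔ SimpleGraph.fromEdgeSet {s(a,b)} := by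
      refine lt_of_le_of_ne le_sup_left (fun hEq => hnadj ?_)
      rw [← hEq] at hAdj
      exact hAdj
    have hmem : H ⊔ SimpleGraph.fromEdgeSet {s(a,b)} ∈ S :=
      ⟨le_trans hGH le_sup_left, hham'⟩
    have hlt2 : H.edgeSet.ncard < (H ⊔ SimpleGraph.fromEdgeSet {s(a,b)}).edgeSet.ncard := by
      apply Set.ncard_lt_ncard
      · exact SimpleGraph.edgeSet_ssubset_edgeSet.mpr hlt
      · exact Set.toFinite _
    have : (H ⊔ SimpleGraph.fromEdgeSet {s(a,b)}).edgeSet.ncard ≤ H.edgeSet.ncard :=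
      hmax hmem (le_of_lt hlt2)
    omega
  -- sorted degree sequence of H
  set DH : V → ℕ := fun v => H.degree v with hDH
  set gH : Fin n → ℕ := fun i => DH (σ.symm i) with hgH
  set e' : Fin n → ℕ := gH ∘ (Tuple.sort gH) with he'def
  have he' : Monotone e' := Tuple.monotone_sort gH
  set ρ' : V ≃ Fin n := σ.trans (Tuple.sort gH).symm with hρ'def
  have hρ' : ∀ v, e' (ρ' v) = DH v := by
    intro v
    show gH (Tuple.sort gH ((Tuple.sort gH).symm (σ v))) = DH v
    rw [Equiv.apply_symm_apply]
    show DH (σ.symm (σ v)) = DH v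
    rw [Equiv.symm_apply_apply]
  have hdom : ∀ i, d i ≤ e' i :=
    sorted_dominates d e' hmono he' (fun v => G.degree v) DH σ ρ' hd hρ'
      (fun v => degree_mono hGH v)
  have hcond' : ∀ k : ℕ, (hk1 : 1 ≤ k) → (hk2 : 2 * k < n) →
      e' ⟨k - 1, by omega⟩ ≤ k → n - k ≤ e' ⟨n - k - 1, by omega⟩ := by
    intro k hk1 hk2 hke
    exact le_trans (h k hk1 hk2 (le_trans (hdom _) hke)) (hdom _)
  -- H is not complete
  have hnadjex : ∃ a b : V, a ≠ b ∧ ¬ H.Adj a b := by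
    by_contra hcomp
    push_neg at hcomp
    apply hHham
    apply isHamiltonian_of_cycleFun h3 hn (fun i => σ.symm i) σ.symm.bijective
    · intro i hi
      apply hcomp
      intro hEq
      have := σ.symm.injective hEq
      rw [Fin.mk.injEq] at this
      omega
    · apply hcomp
      intro hEq
      have := σ.symm.injective hEq
      rw [Fin.mk.injEq] at this
      omega
  -- all nonadjacent pairs have degree sum < n
  have hsum : ∀ x y : V, x ≠ y → ¬ H.Adj x y → H.degree x + H.degree y < n := by
    intro x y hxy hnxy
    exact degree_sum_lt h3 hn hHham x y hxy hnxy (hmaxadd x y hxy hnxy)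
  -- maximal nonadjacent pair
  obtain ⟨a₀, b₀, hab₀, hnadj₀⟩ := hnadjex
  set P : Finset (V × V) :=
    (Finset.univ ×ˢ Finset.univ).filter (fun p => p.1 ≠ p.2 ∧ ¬ H.Adj p.1 p.2) with hP
  have hPne : P.Nonempty := by
    refine ⟨(a₀, b₀), ?_⟩
    rw [hP, Finset.mem_filter]
    exact ⟨Finset.mem_product.mpr ⟨Finset.mem_univ _, Finset.mem_univ _⟩, hab₀, hnadj₀⟩
  obtain ⟨⟨x₀, y₀⟩, hmem₀, hmaxP₀⟩ :=
    Finset.exists_max_image P (fun p => H.degree p.1 + H.degree p.2) hPne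
  rw [hP, Finset.mem_filter] at hmem₀
  obtain ⟨-, hxy₀, hnadjx₀⟩ := hmem₀
  have hmaxP : ∀ x y : V, x ≠ y → ¬ H.Adj x y →
      H.degree x + H.degree y ≤ H.degree x₀ + H.degree y₀ := by
    intro x y hxy hnxy
    apply hmaxP₀ (x, y)
    rw [hP, Finset.mem_filter]
    exact ⟨Finset.mem_product.mpr ⟨Finset.mem_univ _, Finset.mem_univ _⟩, hxy, hnxy⟩
  rcases le_total (H.degree x₀) (H.degree y₀) with hle | hle
  · exact final_step h3 hn e' he' ρ' hρ' hcond' x₀ y₀ hxy₀ hnadjx₀ hle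
      (fun x y hxy hnxy => hmaxP x y hxy hnxy) hsum
  · refine final_step h3 hn e' he' ρ' hρ' hcond' y₀ x₀ (Ne.symm hxy₀)
      (fun hAdj => hnadjx₀ hAdj.symm) hle ?_ hsum
    intro x y hxy hnxy
    have := hmaxP x y hxy hnxy
    omega
end

section
/- Ford–Fulkerson max-flow min-cut theorem: let (V, c, s, t) be a flow network on a finite vertex set V. Then there exist a flow f* and an s,t-cut (A*, B*) with F(f*) = C(A*, B*), and for every flow f and every s,t-cut (A, B) one has F(f) ≤ C(A, B); consequently the maximum value of a flow equals the minimum capacity of an s,t-cut. -/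
open Finset
set_option linter.unusedSectionVars false

/-- `f` is a flow on the network with capacity `c`, source `s` and terminal `t`:
skew symmetry, capacity constraint and conservation at interior vertices. -/
def IsFlow {V : Type*} [Fintype V] (c : V → V → ℝ) (s t : V) (f : V → V → ℝ) : Prop :=
  (∀ u v, f u v = -f v u) ∧ (∀ u v, f u v ≤ c u v) ∧
    (∀ u, u ≠ s → u ≠ t → ∑ v : V, f u v = 0)

/-- The value of a flow `f` with source `s`. -/
def flowValue {V : Type*} [Fintype V] (s : V) (f : V → V → ℝ) : ℝ :=
  ∑ v : V, f s v

/-- `(A, B)` is an `s,t`-cut: `A` and `B` are disjoint sets covering all vertices,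
with `s ∈ A` and `t ∈ B`. -/
def IsCut {V : Type*} [Fintype V] [DecidableEq V] (s t : V) (A B : Finset V) : Prop :=
  Disjoint A B ∧ A ∪ B = Finset.univ ∧ s ∈ A ∧ t ∈ B

/-- The capacity of the cut `(A, B)`. -/
def cutCapacity {V : Type*} [Fintype V] (c : V → V → ℝ) (A B : Finset V) : ℝ :=
  ∑ u ∈ A, ∑ v ∈ B, c u v

section Aux
variable {V : Type*} [Fintype V] [DecidableEq V]

/-- unit flow along a single edge -/
noncomputable def eflow (a b : V) : V → V → ℝ := fun u v =>
  (if u = a ∧ v = b then 1 else 0) - (if u = b ∧ v = a then 1 else 0)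

/-- unit flow along a walk -/
noncomputable def pflow : V → List V → V → V → ℝ
  | _, [] => fun _ _ => 0
  | a, x :: l => fun u v => eflow a x u v + pflow x l u v

lemma eflow_skew (a b u v : V) : eflow a b u v = - eflow a b v u := by
  simp only [eflow]; ring_nf
  by_cases h1 : u = a ∧ v = b <;> by_cases h2 : u = b ∧ v = a <;>
    simp [h1, h2, and_comm] <;> ring

lemma pflow_skew (l : List V) (a : V) : ∀ u v, pflow a l u v = - pflow a l v u := by
  induction l generalizing a with
  | nil => intro u v; simp [pflow]
  | cons x l ih => intro u v; simp only [pflow]; rw [eflow_skew, ih]; ring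

lemma eflow_div (a b u : V) :
    ∑ v : V, eflow a b u v = (if u = a then (1:ℝ) else 0) - (if u = b then 1 else 0) := by
  simp only [eflow, Finset.sum_sub_distrib]
  congr 1
  · by_cases h : u = a
    · subst h; simp [Finset.sum_ite_eq']
    · simp [h]
  · by_cases h : u = b
    · subst h; simp [Finset.sum_ite_eq']
    · simp [h]

lemma pflow_div (l : List V) (a u : V) :
    ∑ v : V, pflow a l u v =
      (if u = a then (1:ℝ) else 0)
        - (if u = (a :: l).getLast (List.cons_ne_nil _ _) then 1 else 0) := by
  induction l generalizing a with
  | nil => simp [pflow]; split_ifs <;> simp_all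
  | cons x l ih =>
    simp only [pflow, Finset.sum_add_distrib, eflow_div, ih x, List.getLast_cons_cons]
    split_ifs <;> simp_all

lemma pflow_le_length (l : List V) (a u v : V) : pflow a l u v ≤ l.length := by
  induction l generalizing a with
  | nil => simp [pflow]
  | cons x l ih =>
    simp only [pflow, List.length_cons]
    have h1 : eflow a x u v ≤ 1 := by
      simp only [eflow]; split_ifs <;> norm_num
    have := ih x
    push_cast
    linarith

lemma pflow_pos_mem (l : List V) (a u v : V) (h : 0 < pflow a l u v) :
    (u, v) ∈ (a :: l).zip l := by
  induction l generalizing a with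
  | nil => simp [pflow] at h
  | cons x l ih =>
    simp only [pflow] at h
    rcases lt_or_ge 0 (pflow x l u v) with hp | hp
    · have := ih x hp
      simp only [List.zip_cons_cons, List.mem_cons]
      right; exact this
    · have he : 0 < eflow a x u v := by linarith
      simp only [eflow] at he
      by_cases h1 : u = a ∧ v = x
      · simp only [List.zip_cons_cons, List.mem_cons]
        left; rw [h1.1, h1.2]
      · exfalso
        rw [if_neg h1] at he
        split_ifs at he <;> linarith

lemma chain_zip_rel {r : V → V → Prop} :
    ∀ (l : List V) (a : V), List.Chain r a l → ∀ p ∈ (a :: l).zip l, r p.1 p.2 := by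
  intro l
  induction l with
  | nil => intro a _ p hp; simp at hp
  | cons x l ih =>
    intro a hch p hp
    rcases (show List.IsChain r (a :: x :: l) from hch) with _ | _ | ⟨hr, hch⟩
    simp only [List.zip_cons_cons, List.mem_cons] at hp
    rcases hp with rfl | hp
    · exact hr
    · exact ih x hch p hp

end Aux

section Main
variable {V : Type*} [Fintype V] [DecidableEq V]

/-- flow across a cut equals the flow value -/
lemma flow_across_cut (s t : V) (c : V → V → ℝ) (f : V → V → ℝ) (A B : Finset V)
    (hf : IsFlow c s t f) (hAB : IsCut s t A B) :
    flowValue s f = ∑ u ∈ A, ∑ v ∈ B, f u v := by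
  obtain ⟨hskew, hcap, hcons⟩ := hf
  obtain ⟨hdisj, hunion, hsA, htB⟩ := hAB
  have hts : t ∉ A := fun h => (Finset.disjoint_left.mp hdisj h) htB
  have h1 : flowValue s f = ∑ u ∈ A, ∑ v : V, f u v := by
    rw [Finset.sum_eq_single_of_mem s hsA]
    · rfl
    · intro u hu hus
      exact hcons u hus (fun h => hts (h ▸ hu))
  have hsplit : ∀ u : V, ∑ v : V, f u v = ∑ v ∈ A, f u v + ∑ v ∈ B, f u v := by
    intro u
    rw [← Finset.sum_union hdisj, hunion]
  have hAA : ∑ u ∈ A, ∑ v ∈ A, f u v = 0 := by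
    have h2 : ∑ u ∈ A, ∑ v ∈ A, f u v = ∑ u ∈ A, ∑ v ∈ A, f v u := Finset.sum_comm
    have h3 : ∑ u ∈ A, ∑ v ∈ A, f u v + ∑ u ∈ A, ∑ v ∈ A, f u v = 0 := by
      nth_rewrite 2 [h2]
      rw [← Finset.sum_add_distrib]
      apply Finset.sum_eq_zero
      intro u _
      rw [← Finset.sum_add_distrib]
      apply Finset.sum_eq_zero
      intro v _
      rw [hskew u v]; ring
    linarith
  calc flowValue s f = ∑ u ∈ A, ∑ v : V, f u v := h1
    _ = ∑ u ∈ A, (∑ v ∈ A, f u v + ∑ v ∈ B, f u v) := by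
        apply Finset.sum_congr rfl; intro u _; exact hsplit u
    _ = (∑ u ∈ A, ∑ v ∈ A, f u v) + ∑ u ∈ A, ∑ v ∈ B, f u v := Finset.sum_add_distrib
    _ = ∑ u ∈ A, ∑ v ∈ B, f u v := by rw [hAA]; ring

/-- weak duality -/
lemma weak_duality (s t : V) (c : V → V → ℝ) (f : V → V → ℝ) (A B : Finset V)
    (hf : IsFlow c s t f) (hAB : IsCut s t A B) :
    flowValue s f ≤ cutCapacity c A B := by
  rw [flow_across_cut s t c f A B hf hAB]
  apply Finset.sum_le_sum
  intro u _
  apply Finset.sum_le_sum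
  intro v _
  exact hf.2.1 u v

end Main

/-- Ford–Fulkerson max-flow min-cut theorem: there exist a flow `f*` and an
`s,t`-cut `(A*, B*)` with value `f* = capacity (A*, B*)`, and every flow value is
at most every cut capacity; hence the maximum flow value equals the minimum cut
capacity. -/
theorem ford_fulkerson_max_flow_min_cut {V : Type*} [Fintype V] [DecidableEq V]
    (s t : V) (hst : s ≠ t) (c : V → V → ℝ) (hc : ∀ u v, 0 ≤ c u v) :
    (∃ (f : V → V → ℝ) (A B : Finset V), IsFlow c s t f ∧ IsCut s t A B ∧
      flowValue s f = cutCapacity c A B) ∧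
    (∀ (f : V → V → ℝ) (A B : Finset V), IsFlow c s t f → IsCut s t A B →
      flowValue s f ≤ cutCapacity c A B) := by
  classical
  constructor
  swap
  · intro f A B hf hAB
    exact weak_duality s t c f A B hf hAB
  -- existence of a maximum flow
  have hS : ∃ f, IsFlow c s t f ∧ ∀ g, IsFlow c s t g → flowValue s g ≤ flowValue s f := by
    have hev : ∀ u v : V, Continuous fun f : V → V → ℝ => f u v :=
      fun u v => (continuous_apply v).comp (continuous_apply u)
    set S : Set (V → V → ℝ) := {f | IsFlow c s t f} with hSdef
    have hSne : S.Nonempty := by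
      refine ⟨fun _ _ => 0, ?_⟩
      exact ⟨by simp, fun u v => hc u v, by simp⟩
    have h1 : IsClosed {f : V → V → ℝ | ∀ u v, f u v = -f v u} := by
      simp only [Set.setOf_forall]
      exact isClosed_iInter fun u => isClosed_iInter fun v =>
        isClosed_eq (hev u v) (hev v u).neg
    have h2 : IsClosed {f : V → V → ℝ | ∀ u v, f u v ≤ c u v} := by
      simp only [Set.setOf_forall]
      exact isClosed_iInter fun u => isClosed_iInter fun v =>
        isClosed_le (hev u v) continuous_const
    have h3 : IsClosed {f : V → V → ℝ | ∀ u, u ≠ s → u ≠ t → ∑ v : V, f u v = 0} := by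
      simp only [Set.setOf_forall]
      exact isClosed_iInter fun u => isClosed_iInter fun _ => isClosed_iInter fun _ =>
        isClosed_eq (continuous_finset_sum _ fun v _ => hev u v) continuous_const
    have hSeq : S = {f : V → V → ℝ | ∀ u v, f u v = -f v u}
        ∩ {f : V → V → ℝ | ∀ u v, f u v ≤ c u v}
        ∩ {f : V → V → ℝ | ∀ u, u ≠ s → u ≠ t → ∑ v : V, f u v = 0} := by
      ext f
      simp only [hSdef, Set.mem_setOf_eq, Set.mem_inter_iff, IsFlow]
      tauto
    have hclosed : IsClosed S := by
      rw [hSeq]; exact (h1.inter h2).inter h3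
    set K : Set (V → V → ℝ) :=
      Set.pi Set.univ fun u => Set.pi Set.univ fun v => Set.Icc (-(c v u)) (c u v) with hK
    have hKcomp : IsCompact K :=
      isCompact_univ_pi fun u => isCompact_univ_pi fun v => isCompact_Icc
    have hsub : S ⊆ K := by
      intro f hf
      rw [hK, Set.mem_univ_pi]
      intro u
      rw [Set.mem_univ_pi]
      intro v
      refine ⟨?_, hf.2.1 u v⟩
      have := hf.2.1 v u
      rw [hf.1 u v]
      linarith
    have hScomp : IsCompact S := hKcomp.of_isClosed_subset hclosed hsub
    have hcont : Continuous (flowValue s : (V → V → ℝ) → ℝ) := by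
      unfold flowValue
      exact continuous_finset_sum _ fun v _ => hev s v
    obtain ⟨f, hfS, hfmax⟩ := hScomp.exists_isMaxOn hSne hcont.continuousOn
    exact ⟨f, hfS, fun g hg => hfmax hg⟩
  obtain ⟨f, hf, hmax⟩ := hS
  -- residual reachability
  set r : V → V → Prop := fun u v => f u v < c u v with hr
  set A : Finset V := Finset.univ.filter (fun v => Relation.ReflTransGen r s v) with hA
  have hsA : s ∈ A := by simp [hA, Relation.ReflTransGen.refl]
  -- t is not reachable
  have htA : t ∉ A := by
    intro ht
    simp only [hA, Finset.mem_filter] at ht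
    obtain ⟨l, hch, hlast⟩ := List.exists_isChain_cons_of_relationReflTransGen ht.2
    have hlnil : l ≠ [] := by
      rintro rfl
      exact hst (by simpa using hlast)
    -- edge list
    set E : List (V × V) := (s :: l).zip l with hE
    have hEne : E ≠ [] := by
      cases l with
      | nil => exact absurd rfl hlnil
      | cons x l => simp [hE]
    have hEr : ∀ p ∈ E, f p.1 p.2 < c p.1 p.2 := fun p hp => chain_zip_rel l s hch p hp
    -- minimum residual
    set T : Finset ℝ := E.toFinset.image (fun p => c p.1 p.2 - f p.1 p.2) with hT
    have hTne : T.Nonempty := by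
      apply Finset.image_nonempty.mpr
      rw [List.toFinset_nonempty_iff]
      exact hEne
    set m : ℝ := T.min' hTne with hm
    have hmpos : 0 < m := by
      obtain ⟨x, hx, hxe⟩ := Finset.mem_image.mp (T.min'_mem hTne)
      rw [List.mem_toFinset] at hx
      have := hEr x hx
      rw [hm] at *
      linarith [hxe ▸ (by linarith : (0:ℝ) < c x.1 x.2 - f x.1 x.2)]
    have hmle : ∀ p ∈ E, m ≤ c p.1 p.2 - f p.1 p.2 := by
      intro p hp
      apply Finset.min'_le
      exact Finset.mem_image_of_mem _ (List.mem_toFinset.mpr hp)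
    set n : ℝ := (l.length : ℝ) with hn
    have hnpos : (0:ℝ) < n + 1 := by positivity
    set ε : ℝ := m / (n + 1) with hε
    have hεpos : 0 < ε := div_pos hmpos hnpos
    set g : V → V → ℝ := pflow s l with hg
    set f' : V → V → ℝ := fun u v => f u v + ε * g u v with hf'
    have hflow' : IsFlow c s t f' := by
      refine ⟨?_, ?_, ?_⟩
      · intro u v
        simp only [hf', hg]
        rw [pflow_skew l s u v, hf.1 u v]; ring
      · intro u v
        simp only [hf']
        rcases le_or_gt (g u v) 0 with hle | hpos
        · have := hf.2.1 u v
          nlinarith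
        · have hmem : (u, v) ∈ E := pflow_pos_mem l s u v hpos
          have h1 : m ≤ c u v - f u v := hmle (u, v) hmem
          have h2 : g u v ≤ n := pflow_le_length l s u v
          have : ε * g u v ≤ ε * (n + 1) := by nlinarith
          have heq : ε * (n + 1) = m := by
            rw [hε]; field_simp
          linarith
      · intro u hus hut
        have : ∑ v : V, f' u v = ∑ v : V, f u v + ε * ∑ v : V, g u v := by
          simp only [hf', Finset.sum_add_distrib, Finset.mul_sum]
        rw [this, hf.2.2 u hus hut]
        rw [hg, pflow_div l s u, hlast]
        simp [hus, hut]
    have hval : flowValue s f' = flowValue s f + ε := by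
      have : ∑ v : V, f' s v = ∑ v : V, f s v + ε * ∑ v : V, g s v := by
        simp only [hf', Finset.sum_add_distrib, Finset.mul_sum]
      simp only [flowValue, this, hg, pflow_div l s s, hlast]
      simp [hst]
    have := hmax f' hflow'
    rw [hval] at this
    linarith
  -- the cut
  refine ⟨f, A, Aᶜ, hf, ⟨disjoint_compl_right, Finset.union_compl A, hsA, Finset.mem_compl.mpr htA⟩, ?_⟩
  rw [flow_across_cut s t c f A Aᶜ hf ⟨disjoint_compl_right, Finset.union_compl A, hsA, Finset.mem_compl.mpr htA⟩]
  unfold cutCapacity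
  apply Finset.sum_congr rfl
  intro u hu
  apply Finset.sum_congr rfl
  intro v hv
  -- saturation
  have hvr : ¬ r u v := by
    intro hruv
    have : v ∈ A := by
      simp only [hA, Finset.mem_filter] at hu ⊢
      exact ⟨Finset.mem_univ v, hu.2.tail hruv⟩
    exact (Finset.mem_compl.mp hv) this
  have h1 : c u v ≤ f u v := not_lt.mp hvr
  have h2 : f u v ≤ c u v := hf.2.1 u v
  linarith
end

section
/- Let G be a connected finite simple undirected graph on n ≥ 2 vertices with m edges. Then 3 − L(G) ≤ 2·E_glob(G) ≤ 1 + D(G), where L(G) is the average shortest path length, E_glob(G) the global efficiency, and D(G) the density of G. -/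
open Finset

/-- For a connected finite simple undirected graph on `n ≥ 2` vertices with `m`
edges, `3 − L(G) ≤ 2·E_glob(G) ≤ 1 + D(G)`, where `L(G)` is the average shortest
path length, `E_glob(G)` the global efficiency and `D(G)` the density. -/
theorem global_efficiency_bounds {V : Type*} [Fintype V] [DecidableEq V]
    (G : SimpleGraph V) [DecidableRel G.Adj] (hG : G.Connected) (n m : ℕ)
    (hn : Fintype.card V = n) (h2 : 2 ≤ n) (hm : G.edgeFinset.card = m) :
    3 - (1 / ((n : ℝ) * (n - 1))) *
        ∑ s : V, ∑ t : V, (if s ≠ t then (G.dist s t : ℝ) else 0) ≤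
      2 * ((1 / ((n : ℝ) * (n - 1))) *
        ∑ s : V, ∑ t : V, (if s ≠ t then 1 / (G.dist s t : ℝ) else 0)) ∧
    2 * ((1 / ((n : ℝ) * (n - 1))) *
        ∑ s : V, ∑ t : V, (if s ≠ t then 1 / (G.dist s t : ℝ) else 0)) ≤
      1 + (2 * (m : ℝ)) / ((n : ℝ) * (n - 1)) := by
  set N : ℝ := (n : ℝ) * (n - 1) with hNdef
  have hn1 : (1:ℝ) ≤ (n:ℝ) - 1 := by
    have : (2:ℝ) ≤ (n:ℝ) := by exact_mod_cast h2
    linarith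
  have hN : (0:ℝ) < N := by
    have : (0:ℝ) < (n:ℝ) := by positivity
    nlinarith
  set S : ℝ := ∑ s : V, ∑ t : V, (if s ≠ t then (G.dist s t : ℝ) else 0) with hS
  set T : ℝ := ∑ s : V, ∑ t : V, (if s ≠ t then 1 / (G.dist s t : ℝ) else 0) with hT
  -- count of ordered pairs
  have hcard : ∑ s : V, ∑ t : V, (if s ≠ t then (1:ℝ) else 0) = N := by
    have hinner : ∀ s : V, ∑ t : V, (if s ≠ t then (1:ℝ) else 0) = (n:ℝ) - 1 := by
      intro s
      have : ∑ t : V, (if s ≠ t then (1:ℝ) else 0)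
          = ∑ t : V, ((1:ℝ) - (if s = t then 1 else 0)) := by
        apply Finset.sum_congr rfl
        intro t _
        by_cases h : s = t <;> simp [h]
      rw [this, Finset.sum_sub_distrib]
      simp [Finset.card_univ, hn]
    rw [Finset.sum_congr rfl (fun s _ => hinner s)]
    simp [Finset.card_univ, hn, hNdef, mul_comm]
    ring
  -- adjacency count
  have hadj : ∑ s : V, ∑ t : V, (if G.Adj s t then (1:ℝ) else 0) = 2 * (m:ℝ) := by
    have hdeg : ∀ s : V, ∑ t : V, (if G.Adj s t then (1:ℝ) else 0) = (G.degree s : ℝ) := by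
      intro s
      rw [SimpleGraph.degree]
      rw [SimpleGraph.neighborFinset_eq_filter]
      push_cast [Finset.card_filter]
      simp
    rw [Finset.sum_congr rfl (fun s _ => hdeg s)]
    have := G.sum_degrees_eq_twice_card_edges
    rw [hm] at this
    exact_mod_cast congrArg (Nat.cast : ℕ → ℝ) this
  have hdpos : ∀ s t : V, s ≠ t → 1 ≤ G.dist s t := fun s t h => hG.pos_dist_of_ne h
  -- pointwise bound 1 : 3·[s≠t] ≤ 2·(1/d) + d
  have key1 : 3 * N ≤ 2 * T + S := by
    rw [← hcard, Finset.mul_sum, hT, hS, Finset.mul_sum, ← Finset.sum_add_distrib]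
    apply Finset.sum_le_sum
    intro s _
    rw [Finset.mul_sum, Finset.mul_sum, ← Finset.sum_add_distrib]
    apply Finset.sum_le_sum
    intro t _
    by_cases h : s = t
    · simp [h]
    · have hd : 1 ≤ G.dist s t := hdpos s t h
      simp only [h, ne_eq, not_false_eq_true, if_true, mul_ite, mul_one]
      have hd' : (1:ℝ) ≤ (G.dist s t : ℝ) := by exact_mod_cast hd
      rcases Nat.lt_or_ge (G.dist s t) 3 with h3 | h3
      · interval_cases hdist : G.dist s t <;> norm_num [hdist] at *
      · have h3' : (3:ℝ) ≤ (G.dist s t : ℝ) := by exact_mod_cast h3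
        have : (0:ℝ) < (G.dist s t : ℝ) := by linarith
        have : 0 < 2 * (1 / (G.dist s t : ℝ)) := by positivity
        linarith
  -- pointwise bound 2 : 2·(1/d) ≤ [s≠t] + [adj]
  have key2 : 2 * T ≤ N + 2 * (m:ℝ) := by
    rw [← hcard, ← hadj, hT, Finset.mul_sum, ← Finset.sum_add_distrib]
    apply Finset.sum_le_sum
    intro s _
    rw [Finset.mul_sum, ← Finset.sum_add_distrib]
    apply Finset.sum_le_sum
    intro t _
    by_cases h : s = t
    · simp [h, G.irrefl]
    · have hd : 1 ≤ G.dist s t := hdpos s t h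
      simp only [h, ne_eq, not_false_eq_true, if_true]
      by_cases ha : G.Adj s t
      · have hd1 : G.dist s t = 1 := SimpleGraph.dist_eq_one_iff_adj.mpr ha
        simp [hd1, ha]
        norm_num
      · have hd2 : 2 ≤ G.dist s t := by
          rcases Nat.lt_or_ge (G.dist s t) 2 with hh | hh
          · interval_cases hdist : G.dist s t
            exact absurd (SimpleGraph.dist_eq_one_iff_adj.mp hdist) ha
          · exact hh
        have hd2' : (2:ℝ) ≤ (G.dist s t : ℝ) := by exact_mod_cast hd2
        have h0 : (0:ℝ) < (G.dist s t : ℝ) := by linarith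
        have : 2 * (1 / (G.dist s t : ℝ)) ≤ 1 := by
          rw [mul_one_div, div_le_one h0]; linarith
        simp only [ha, if_false, add_zero]
        exact this
  have hNinv : (0:ℝ) < 1 / N := by positivity
  have hNN : (1 / N) * N = 1 := by field_simp
  constructor
  · have := mul_le_mul_of_nonneg_left key1 hNinv.le
    nlinarith
  · have := mul_le_mul_of_nonneg_left key2 hNinv.le
    have h2m : (2 * (m:ℝ)) / N = (1/N) * (2 * (m:ℝ)) := by ring
    nlinarith
end

section
/- Let G be a connected finite simple undirected graph on n ≥ 2 vertices, and let 0 = λ₁ ≤ λ₂ ≤ … ≤ λₙ be the eigenvalues of its normalized Laplacian matrix Δ. Then λ₂ ≤ n/(n−1), and equality λ₂ = n/(n−1) holds if and only if G is the complete graph K_n. (In particular, among all connected graphs on n vertices the complete graph has the largest possible λ₂.) -/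
open Polynomial Matrix

/-- The normalized Laplacian matrix `Δ = D^{-1/2} L D^{-1/2}` of a graph:
`Δ_{ii} = 1`, `Δ_{ij} = -1/√(dᵢdⱼ)` if `{i,j}` is an edge, `0` otherwise. -/
noncomputable def normLapMatrix {V : Type*} [Fintype V] [DecidableEq V]
    (G : SimpleGraph V) [DecidableRel G.Adj] : Matrix V V ℝ :=
  fun i j =>
    if i = j then 1
    else if G.Adj i j then -(1 / Real.sqrt ((G.degree i : ℝ) * (G.degree j : ℝ)))
    else 0

lemma charpoly_eval_eq_zero_iff {m : ℕ} (A : Matrix (Fin m) (Fin m) ℝ) (t : ℝ) :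
    A.charpoly.eval t = 0 ↔ ∃ v ≠ 0, A *ᵥ v = t • v := by
  have hmap : (charmatrix A).map (evalRingHom t) = t • (1 : Matrix (Fin m) (Fin m) ℝ) - A := by
    ext i j
    by_cases h : i = j
    · subst h
      simp [charmatrix_apply_eq, Matrix.one_apply]
    · simp [charmatrix_apply_ne _ _ _ h, Matrix.one_apply_ne h]
  have hdet : A.charpoly.eval t = (t • (1 : Matrix (Fin m) (Fin m) ℝ) - A).det := by
    rw [← hmap, Matrix.charpoly]
    exact (RingHom.map_det (evalRingHom t) (charmatrix A))
  rw [hdet, ← Matrix.exists_mulVec_eq_zero_iff]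
  refine exists_congr fun v => and_congr_right fun hv => ?_
  rw [Matrix.sub_mulVec, Matrix.smul_mulVec, Matrix.one_mulVec, sub_eq_zero, eq_comm]

lemma degree_pos_of_connected {n : ℕ} (hn : 2 ≤ n) (G : SimpleGraph (Fin n))
    [DecidableRel G.Adj] (hG : G.Connected) (v : Fin n) : 0 < G.degree v := by
  rw [SimpleGraph.degree_pos_iff_exists_adj]
  have : Nontrivial (Fin n) := Fin.nontrivial_iff_two_le.mpr hn
  obtain ⟨w, hw⟩ := exists_ne v
  obtain ⟨p⟩ := hG.preconnected v w
  obtain ⟨u, h, -, -⟩ := (SimpleGraph.Walk.not_nil_iff (p := p)).mp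
    (SimpleGraph.Walk.not_nil_of_ne (Ne.symm hw))
  exact ⟨u, h⟩

lemma normLap_eq {n : ℕ} (hn : 2 ≤ n) (G : SimpleGraph (Fin n)) [DecidableRel G.Adj]
    (hG : G.Connected) :
    normLapMatrix G =
      Matrix.diagonal (fun v => (Real.sqrt (G.degree v))⁻¹) * G.lapMatrix ℝ *
        Matrix.diagonal (fun v => (Real.sqrt (G.degree v))⁻¹) := by
  ext i j
  rw [Matrix.mul_diagonal, Matrix.diagonal_mul]
  have hdi : (0:ℝ) < (G.degree i : ℝ) := by
    exact_mod_cast degree_pos_of_connected hn G hG i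
  have hdj : (0:ℝ) < (G.degree j : ℝ) := by
    exact_mod_cast degree_pos_of_connected hn G hG j
  by_cases h : i = j
  · subst h
    have h1 : Real.sqrt (G.degree i) * Real.sqrt (G.degree i) = (G.degree i : ℝ) :=
      Real.mul_self_sqrt hdi.le
    have h2 : Real.sqrt (G.degree i) ≠ 0 := by positivity
    simp only [normLapMatrix, if_pos rfl, SimpleGraph.lapMatrix, Matrix.sub_apply,
      SimpleGraph.degMatrix, Matrix.of_apply, if_pos rfl, SimpleGraph.adjMatrix_apply,
      SimpleGraph.irrefl, if_false, sub_zero]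
    field_simp
    simp [Real.sq_sqrt hdi.le]
  · by_cases hadj : G.Adj i j
    · simp only [normLapMatrix, if_neg h, if_pos hadj, SimpleGraph.lapMatrix, Matrix.sub_apply,
        SimpleGraph.degMatrix, Matrix.of_apply, if_neg h, SimpleGraph.adjMatrix_apply,
        if_pos hadj, zero_sub]
      rw [Real.sqrt_mul hdi.le]
      field_simp
      simp [Matrix.diagonal_apply_ne _ h]
    · simp only [normLapMatrix, if_neg h, if_neg hadj, SimpleGraph.lapMatrix, Matrix.sub_apply,
        SimpleGraph.degMatrix, Matrix.of_apply, if_neg h, SimpleGraph.adjMatrix_apply,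
        if_neg hadj, zero_sub, sub_zero]
      rw [Matrix.diagonal_apply_ne _ h]
      ring

lemma normLap_posSemidef {n : ℕ} (hn : 2 ≤ n) (G : SimpleGraph (Fin n)) [DecidableRel G.Adj]
    (hG : G.Connected) : (normLapMatrix G).PosSemidef := by
  rw [normLap_eq hn G hG]
  have hD : (Matrix.diagonal (fun v : Fin n => (Real.sqrt (G.degree v))⁻¹))ᴴ
      = Matrix.diagonal (fun v : Fin n => (Real.sqrt (G.degree v))⁻¹) := by
    simp [Matrix.diagonal_conjTranspose]
  have := (SimpleGraph.posSemidef_lapMatrix ℝ G).mul_mul_conjTranspose_same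
    (Matrix.diagonal (fun v : Fin n => (Real.sqrt (G.degree v))⁻¹))
  rwa [hD] at this

/-- For a connected graph on `n ≥ 2` vertices with normalized Laplacian
eigenvalues `μ 0 ≤ μ 1 ≤ … ≤ μ (n-1)` (listed with multiplicity, i.e. the
characteristic polynomial is `∏ i, (X - μ i)`), the second smallest eigenvalue
satisfies `μ 1 ≤ n/(n-1)`, with equality if and only if `G` is the complete
graph. -/
theorem normLap_second_eigenvalue_le (n : ℕ) (hn : 2 ≤ n)
    (G : SimpleGraph (Fin n)) [DecidableRel G.Adj] (hG : G.Connected)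
    (μ : Fin n → ℝ) (hmono : Monotone μ)
    (hchar : (normLapMatrix G).charpoly = ∏ i : Fin n, (X - C (μ i))) :
    μ ⟨1, by omega⟩ ≤ (n : ℝ) / ((n : ℝ) - 1) ∧
      (μ ⟨1, by omega⟩ = (n : ℝ) / ((n : ℝ) - 1) ↔ G = ⊤) := by
  have hn0 : 0 < n := by omega
  haveI : Nonempty (Fin n) := ⟨⟨0, hn0⟩⟩
  set i0 : Fin n := ⟨0, hn0⟩ with hi0
  set i1 : Fin n := ⟨1, by omega⟩ with hi1
  set c : ℝ := (n : ℝ) / ((n : ℝ) - 1) with hc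
  have hn2 : (2:ℝ) ≤ (n:ℝ) := by exact_mod_cast hn
  have hn1pos : (0:ℝ) < (n:ℝ) - 1 := by linarith
  have hc_mul : c * ((n:ℝ) - 1) = (n:ℝ) := div_mul_cancel₀ _ (ne_of_gt hn1pos)
  have hc_gt1 : 1 < c := by rw [hc, lt_div_iff₀ hn1pos]; linarith
  have hc_pos : (0:ℝ) < c := by linarith
  -- trace
  have htrace : Matrix.trace (normLapMatrix G) = (n:ℝ) := by
    simp [Matrix.trace, Matrix.diag, normLapMatrix]
  have hsum : ∑ i, μ i = (n:ℝ) := by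
    have h2 := Matrix.trace_eq_neg_charpoly_coeff (normLapMatrix G)
    rw [hchar] at h2
    have h3 := Polynomial.prod_X_sub_C_coeff_card_pred (Finset.univ : Finset (Fin n)) μ
      (by simp [hn0])
    simp only [Finset.card_univ, Fintype.card_fin] at h3 h2
    rw [h3, neg_neg] at h2
    rw [← h2, htrace]
  -- eigenvalues
  have heig : ∀ i : Fin n, ∃ v, v ≠ 0 ∧ normLapMatrix G *ᵥ v = μ i • v := by
    intro i
    have hroot : (normLapMatrix G).charpoly.eval (μ i) = 0 := by
      rw [hchar, Polynomial.eval_prod]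
      exact Finset.prod_eq_zero (Finset.mem_univ i) (by simp)
    obtain ⟨v, hv, hmv⟩ := (charpoly_eval_eq_zero_iff _ _).mp hroot
    exact ⟨v, hv, hmv⟩
  have hpsd := normLap_posSemidef hn G hG
  have hnn : ∀ i : Fin n, 0 ≤ μ i := by
    intro i
    obtain ⟨v, hv, hmv⟩ := heig i
    have h1 := hpsd.dotProduct_mulVec_nonneg v
    rw [hmv, star_trivial, dotProduct_smul, smul_eq_mul] at h1
    have hdp : 0 < dotProduct v v := by
      refine lt_of_le_of_ne (Finset.sum_nonneg fun k _ => mul_self_nonneg _) ?_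
      exact fun h => hv (dotProduct_self_eq_zero.mp h.symm)
    by_contra hneg
    push_neg at hneg
    nlinarith
  have hmono01 : ∀ i : Fin n, i ≠ i0 → μ i1 ≤ μ i := by
    intro i hi
    apply hmono
    rw [Fin.le_def]
    have h0 : (i : ℕ) ≠ 0 := fun h => hi (Fin.ext h)
    simp only [hi1]
    omega
  have hsub : ∑ i ∈ Finset.univ.erase i0, μ i = (n:ℝ) - μ i0 := by
    have := Finset.sum_erase_add Finset.univ μ (Finset.mem_univ i0)
    rw [hsum] at this
    linarith
  have hcast : ((n - 1 : ℕ) : ℝ) = (n:ℝ) - 1 := by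
    rw [Nat.cast_sub (by omega)]
    simp
  have hkey : ((n:ℝ) - 1) * μ i1 ≤ (n:ℝ) - μ i0 := by
    have hb := Finset.card_nsmul_le_sum (Finset.univ.erase i0) μ (μ i1)
      (fun x hx => hmono01 x (Finset.mem_erase.mp hx).1)
    rw [Finset.card_erase_of_mem (Finset.mem_univ i0), Finset.card_univ, Fintype.card_fin,
      hsub, nsmul_eq_mul, hcast] at hb
    exact hb
  have hle : μ i1 ≤ c := by
    rw [hc, le_div_iff₀ hn1pos, mul_comm]
    linarith [hnn i0, hkey]
  refine ⟨hle, ?_, ?_⟩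
  · -- equality → complete graph
    intro heq
    have h00 : μ i0 = 0 := by
      have h2 : ((n:ℝ)-1) * c = (n:ℝ) := by linarith [hc_mul, mul_comm c ((n:ℝ)-1)]
      have := hkey
      rw [heq] at this
      have := hnn i0
      linarith
    have hall : ∀ i : Fin n, i ≠ i0 → μ i = c := by
      intro i hi
      have hzero : ∑ j ∈ Finset.univ.erase i0, (μ j - c) = 0 := by
        rw [Finset.sum_sub_distrib, hsub, Finset.sum_const,
          Finset.card_erase_of_mem (Finset.mem_univ i0), Finset.card_univ, Fintype.card_fin,
          nsmul_eq_mul, hcast, h00]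
        linarith [mul_comm ((n:ℝ)-1) c, hc_mul]
      have h := (Finset.sum_eq_zero_iff_of_nonneg
        (fun j hj => sub_nonneg.mpr (heq ▸ hmono01 j (Finset.mem_erase.mp hj).1))).mp hzero i
        (Finset.mem_erase.mpr ⟨hi, Finset.mem_univ i⟩)
      linarith [h]
    have hμval : ∀ j : Fin n, μ j = 0 ∨ μ j = c := by
      intro j
      by_cases h : j = i0
      · exact Or.inl (h ▸ h00)
      · exact Or.inr (hall j h)
    -- spectral theorem
    have hherm : (normLapMatrix G).IsHermitian := hpsd.1
    set U : Matrix (Fin n) (Fin n) ℝ :=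
      (Matrix.IsHermitian.eigenvectorUnitary hherm : Matrix (Fin n) (Fin n) ℝ) with hU
    set e : Fin n → ℝ := hherm.eigenvalues with he
    have hspec : normLapMatrix G = U * Matrix.diagonal e * star U := by
      have h := hherm.spectral_theorem
      rwa [RCLike.ofReal_real_eq_id, Function.id_comp] at h
    have hUstar : star U * U = 1 :=
      Matrix.mem_unitaryGroup_iff'.mp (Matrix.IsHermitian.eigenvectorUnitary hherm).2
    have hUUstar : U * star U = 1 :=
      Matrix.mem_unitaryGroup_iff.mp (Matrix.IsHermitian.eigenvectorUnitary hherm).2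
    have horth : ∀ i j, ∑ k, U i k * U j k = if i = j then 1 else 0 := by
      intro i j
      have h := Matrix.ext_iff.mpr hUUstar i j
      rw [Matrix.mul_apply] at h
      simpa [Matrix.star_apply, Matrix.one_apply] using h
    have htre : ∑ k, e k = (n:ℝ) := by
      have h2 := congrArg Matrix.trace hspec
      rw [Matrix.trace_mul_comm (U * Matrix.diagonal e) (star U), ← Matrix.mul_assoc, hUstar,
        Matrix.one_mul, Matrix.trace_diagonal, htrace] at h2
      exact h2.symm
    have heval : ∀ k, e k = 0 ∨ e k = c := by
      intro k
      have hev := hherm.mulVec_eigenvectorBasis k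
      have hvne : (⇑(hherm.eigenvectorBasis k) : Fin n → ℝ) ≠ 0 := by
        intro h
        exact hherm.eigenvectorBasis.orthonormal.ne_zero k (by ext i; exact congrFun h i)
      have hroot : (normLapMatrix G).charpoly.eval (e k) = 0 := by
        rw [charpoly_eval_eq_zero_iff]
        exact ⟨_, hvne, hev⟩
      rw [hchar, Polynomial.eval_prod] at hroot
      obtain ⟨j, -, hj⟩ := Finset.prod_eq_zero_iff.mp hroot
      simp only [Polynomial.eval_sub, Polynomial.eval_X, Polynomial.eval_C, sub_eq_zero] at hj
      rcases hμval j with h | h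
      · exact Or.inl (by rw [hj, h])
      · exact Or.inr (by rw [hj, h])
    -- exactly one zero eigenvalue
    obtain ⟨k0, hk0⟩ : ∃ k0 : Fin n, ∀ k, e k = 0 ↔ k = k0 := by
      classical
      have hcardT : (Finset.univ.filter (fun k => e k = 0)).card = 1 := by
        have hsplit := Finset.sum_filter_add_sum_filter_not Finset.univ (fun k => e k = 0) e
        have hz : ∑ k ∈ Finset.univ.filter (fun k => e k = 0), e k = 0 :=
          Finset.sum_eq_zero fun k hk => (Finset.mem_filter.mp hk).2
        have hcval : ∑ k ∈ Finset.univ.filter (fun k => ¬ e k = 0), e k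
            = ((Finset.univ.filter (fun k => ¬ e k = 0)).card : ℝ) * c := by
          rw [Finset.sum_congr rfl (fun k hk =>
            (heval k).resolve_left (Finset.mem_filter.mp hk).2), Finset.sum_const,
            nsmul_eq_mul]
        have hcards := Finset.card_filter_add_card_filter_not
          (s := Finset.univ) (p := fun k : Fin n => e k = 0)
        rw [Finset.card_univ, Fintype.card_fin] at hcards
        rw [hz, zero_add, hcval, htre] at hsplit
        -- hsplit : card * c = n
        have hcc : ((Finset.univ.filter (fun k => ¬ e k = 0)).card : ℝ) = (n:ℝ) - 1 := by
          have h2 : ((n:ℝ) - 1) * c = (n:ℝ) := by linarith [mul_comm c ((n:ℝ)-1), hc_mul]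
          have := mul_right_cancel₀ (ne_of_gt hc_pos) (hsplit.trans h2.symm)
          exact this
        have hcc2 : (Finset.univ.filter (fun k => ¬ e k = 0)).card = n - 1 := by
          have := hcc.trans hcast.symm
          exact_mod_cast this
        rw [hcc2] at hcards
        omega
      obtain ⟨k0, hk0'⟩ := Finset.card_eq_one.mp hcardT
      refine ⟨k0, fun k => ?_⟩
      constructor
      · intro h
        have hmem : k ∈ Finset.univ.filter (fun k => e k = 0) :=
          Finset.mem_filter.mpr ⟨Finset.mem_univ k, h⟩
        rw [hk0'] at hmem
        exact Finset.mem_singleton.mp hmem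
      · intro h
        subst h
        have hmem : k ∈ Finset.univ.filter (fun k => e k = 0) := by
          rw [hk0']; exact Finset.mem_singleton_self k
        exact (Finset.mem_filter.mp hmem).2
    have hek0 : e k0 = 0 := (hk0 k0).mpr rfl
    have hekc : ∀ k, k ≠ k0 → e k = c :=
      fun k hk => (heval k).resolve_left (fun h => hk ((hk0 k).mp h))
    have hentry : ∀ i j, normLapMatrix G i j
        = c * (if i = j then 1 else 0) - c * (U i k0 * U j k0) := by
      intro i j
      have h1 : normLapMatrix G i j = ∑ k, U i k * e k * U j k := by
        conv_lhs => rw [hspec]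
        rw [Matrix.mul_apply]
        refine Finset.sum_congr rfl fun k _ => ?_
        rw [Matrix.mul_diagonal, Matrix.star_apply, star_trivial]
      rw [h1]
      have h2 : ∀ k, U i k * e k * U j k
          = c * (U i k * U j k) - (if k = k0 then c * (U i k0 * U j k0) else 0) := by
        intro k
        by_cases hk : k = k0
        · subst hk; rw [hek0]; simp
        · rw [hekc k hk, if_neg hk]; ring
      rw [Finset.sum_congr rfl fun k _ => h2 k, Finset.sum_sub_distrib, ← Finset.mul_sum,
        horth i j, Finset.sum_ite_eq' Finset.univ k0 (fun _ => c * (U i k0 * U j k0)),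
        if_pos (Finset.mem_univ k0)]
    have hune : ∀ i, U i k0 ≠ 0 := by
      intro i h
      have h1 := hentry i i
      rw [if_pos rfl, h] at h1
      have h2 : normLapMatrix G i i = 1 := by simp [normLapMatrix]
      rw [h2] at h1
      simp at h1
      linarith
    ext i j
    simp only [SimpleGraph.top_adj]
    constructor
    · exact fun h => h.ne
    · intro hij
      by_contra hadj
      have h1 := hentry i j
      have h2 : normLapMatrix G i j = 0 := by simp [normLapMatrix, hij, hadj]
      rw [h2, if_neg hij] at h1
      have h3 : U i k0 * U j k0 = 0 := by
        rw [mul_zero, zero_sub] at h1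
        have h4 : c * (U i k0 * U j k0) = 0 := by linarith
        rcases mul_eq_zero.mp h4 with h | h
        · exact absurd h (ne_of_gt hc_pos)
        · exact h
      rcases mul_eq_zero.mp h3 with h | h
      · exact hune i h
      · exact hune j h
  · -- complete graph → equality
    intro hGT
    have hdegN : ∀ v : Fin n, G.neighborFinset v = Finset.univ.erase v := by
      intro v
      ext w
      simp [SimpleGraph.mem_neighborFinset, hGT, ne_comm]
    have hdeg : ∀ v : Fin n, (G.degree v : ℝ) = (n:ℝ) - 1 := by
      intro v
      rw [SimpleGraph.degree, hdegN v, Finset.card_erase_of_mem (Finset.mem_univ v),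
        Finset.card_univ, Fintype.card_fin, hcast]
    set s : ℝ := 1 / ((n:ℝ) - 1) with hs
    have hcs : c = 1 + s := by
      rw [hc, hs]
      field_simp
      ring
    have hns : (n:ℝ) * s = c := by
      rw [hc, hs]
      field_simp
    have hΔ : ∀ i j : Fin n, normLapMatrix G i j = if i = j then 1 else -s := by
      intro i j
      by_cases h : i = j
      · simp [normLapMatrix, h]
      · have hadj : G.Adj i j := by rw [hGT]; exact h
        simp only [normLapMatrix, if_neg h, if_pos hadj]
        rw [hdeg i, hdeg j, Real.sqrt_mul_self hn1pos.le, hs]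
    have hval : ∀ i : Fin n, μ i = 0 ∨ μ i = c := by
      intro i
      obtain ⟨v, hv, hmv⟩ := heig i
      set S : ℝ := ∑ j, v j with hS
      have hrow : ∀ i' : Fin n, μ i * v i' = (1 + s) * v i' - s * S := by
        intro i'
        have h1 : (normLapMatrix G *ᵥ v) i' = μ i * v i' := by
          rw [hmv]; simp
        rw [← h1, Matrix.mulVec, dotProduct]
        have h2 : ∀ j, normLapMatrix G i' j * v j
            = (-s) * v j + (if j = i' then (1+s) * v j else 0) := by
          intro j
          rw [hΔ]
          by_cases h : i' = j
          · rw [if_pos h, if_pos h.symm]; ring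
          · rw [if_neg h, if_neg (Ne.symm h)]; ring
        rw [Finset.sum_congr rfl fun j _ => h2 j, Finset.sum_add_distrib, ← Finset.mul_sum,
          Finset.sum_ite_eq' Finset.univ i' (fun j => (1+s) * v j), if_pos (Finset.mem_univ i'),
          ← hS]
        ring
      have hms : μ i * S = 0 := by
        have h2 : ∑ i', μ i * v i' = ∑ i' : Fin n, ((1+s) * v i' - s * S) :=
          Finset.sum_congr rfl fun i' _ => hrow i'
        rw [← Finset.mul_sum, Finset.sum_sub_distrib, ← Finset.mul_sum, ← hS,
          Finset.sum_const, Finset.card_univ, Fintype.card_fin, nsmul_eq_mul] at h2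
        have h3 : (n:ℝ) * (s * S) = c * S := by rw [← mul_assoc, hns]
        rw [h2, h3]
        rw [hcs]
        ring
      rcases eq_or_ne (μ i) 0 with h | h
      · exact Or.inl h
      · right
        have hS0 : S = 0 := by
          rcases mul_eq_zero.mp hms with h' | h'
          · exact absurd h' h
          · exact h'
        obtain ⟨i', hvi'⟩ := Function.ne_iff.mp hv
        have h4 := hrow i'
        rw [hS0, mul_zero, sub_zero] at h4
        have h5 : μ i = 1 + s := mul_right_cancel₀ hvi' h4
        rw [h5, hcs]
    by_contra hne
    have h10 : μ i1 = 0 := (hval i1).resolve_right hne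
    have h00 : μ i0 = 0 := by
      have h1 : μ i0 ≤ μ i1 := hmono (by rw [Fin.le_def]; simp [hi0, hi1])
      have h2 := hnn i0
      linarith [h10 ▸ h1]
    have hi1mem : i1 ∈ Finset.univ.erase i0 :=
      Finset.mem_erase.mpr ⟨by simp [hi0, hi1, Fin.ext_iff], Finset.mem_univ _⟩
    set s2 := (Finset.univ.erase i0).erase i1 with hs2
    have hcard2 : s2.card = n - 2 := by
      rw [hs2, Finset.card_erase_of_mem hi1mem, Finset.card_erase_of_mem (Finset.mem_univ i0),
        Finset.card_univ, Fintype.card_fin]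
      omega
    have hbound := Finset.sum_le_card_nsmul s2 μ c
      (fun x _ => (hval x).elim (fun h => h ▸ hc_pos.le) (fun h => h.le))
    rw [hcard2, nsmul_eq_mul] at hbound
    have hcast2 : ((n - 2 : ℕ) : ℝ) = (n:ℝ) - 2 := by
      rw [Nat.cast_sub hn]
      simp
    rw [hcast2] at hbound
    have hsplit : ∑ i, μ i = ∑ i ∈ s2, μ i + μ i1 + μ i0 := by
      rw [hs2, Finset.sum_erase_add _ _ hi1mem, Finset.sum_erase_add _ _ (Finset.mem_univ i0)]
    have hnc : ((n:ℝ) - 2) * c = (n:ℝ) - c := by linear_combination hc_mul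
    rw [hsum, h00, h10, add_zero, add_zero] at hsplit
    rw [hnc] at hbound
    linarith
end

section
/- Let G be a finite simple undirected graph with maximum vertex degree d, let p > 1, and let φ_p(t) = |t|^{p−2}·t. If (λ, x) is an eigenpair of the graph p-Laplacian L_p of G, then λ ≤ 2^{p−1}·d. Moreover, 2^{p−1}·d is an eigenvalue of L_p if and only if G has a connected component that is bipartite and d-regular (in particular containing a vertex realizing the maximum degree d). -/
open Finset

/-- `φ_p(t) = |t|^{p-2} t`. -/
noncomputable def phiP (p t : ℝ) : ℝ := |t| ^ (p - 2) * t

/-- `(λ, x)` is an eigenpair of the graph `p`-Laplacian `L_p`: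
`x ≠ 0` and for every vertex `i`, `∑_{j ∼ i} φ_p(x i − x j) = λ φ_p(x i)`. -/
def IsPLapEigenpair {V : Type*} [Fintype V] [DecidableEq V]
    (G : SimpleGraph V) [DecidableRel G.Adj] (p : ℝ) (lam : ℝ) (x : V → ℝ) : Prop :=
  x ≠ 0 ∧ ∀ i : V, ∑ j ∈ G.neighborFinset i, phiP p (x i - x j) = lam * phiP p (x i)

lemma abs_phiP {p : ℝ} (hp : 1 < p) (t : ℝ) : |phiP p t| = |t| ^ (p - 1) := by
  rcases eq_or_ne t 0 with rfl | ht
  · rw [phiP]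
    simp [Real.zero_rpow (by linarith : p - 1 ≠ 0)]
  · have h0 : (0:ℝ) < |t| := abs_pos.mpr ht
    have h1 : |t| ^ (p-2) * |t| = |t| ^ (p-1) := by
      rw [show p - 1 = (p-2) + 1 by ring, Real.rpow_add_one (ne_of_gt h0)]
    rw [phiP, abs_mul, abs_of_nonneg (Real.rpow_nonneg (abs_nonneg t) _), h1]

lemma pLap_core {V : Type*} [Fintype V] [DecidableEq V]
    (G : SimpleGraph V) [DecidableRel G.Adj] {p lam : ℝ} (hp : 1 < p)
    {x : V → ℝ}
    (hx : ∀ i, ∑ j ∈ G.neighborFinset i, phiP p (x i - x j) = lam * phiP p (x i))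
    (i : V) (hmax : ∀ v, |x v| ≤ |x i|) (hne : x i ≠ 0) :
    lam ≤ 2 ^ (p-1) * G.degree i ∧
    (∀ d : ℕ, G.degree i ≤ d → lam = 2 ^ (p-1) * d →
      G.degree i = d ∧ ∀ j ∈ G.neighborFinset i, x j = - x i) := by
  set m := |x i| with hm_def
  have hm : 0 < m := abs_pos.mpr hne
  set mp := m ^ (p-1) with hmp_def
  have hmp : 0 < mp := Real.rpow_pos_of_pos hm _
  have hp1 : (0:ℝ) < p - 1 := by linarith
  set φ := phiP p (x i) with hφ_def
  have hφabs : |φ| = mp := abs_phiP hp (x i)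
  have hφsq : φ * φ = mp * mp := by rw [← abs_mul_abs_self φ, hφabs]
  set B : ℝ := 2 ^ (p-1) * (mp * mp) with hB_def
  have hB : 0 < B := by
    have : (0:ℝ) < 2 ^ (p-1) := Real.rpow_pos_of_pos two_pos _
    positivity
  have h2m : (2 * m) ^ (p-1) = 2 ^ (p-1) * mp := by
    rw [Real.mul_rpow (by norm_num) hm.le]
  -- term bound
  have hterm : ∀ j, phiP p (x i - x j) * φ ≤ B := by
    intro j
    have habs : |x i - x j| ≤ 2 * m := by
      have h1 := abs_sub (x i) (x j)
      have h2 := hmax j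
      linarith
    calc phiP p (x i - x j) * φ ≤ |phiP p (x i - x j) * φ| := le_abs_self _
      _ = |x i - x j| ^ (p-1) * mp := by rw [abs_mul, abs_phiP hp, hφabs]
      _ ≤ (2 * m) ^ (p-1) * mp := by
          exact mul_le_mul_of_nonneg_right
            (Real.rpow_le_rpow (abs_nonneg _) habs hp1.le) hmp.le
      _ = B := by rw [h2m, hB_def]; ring
  have hsum : ∑ j ∈ G.neighborFinset i, phiP p (x i - x j) * φ = lam * (mp * mp) := by
    rw [← Finset.sum_mul, hx i, mul_assoc, hφsq]
  have hsum_le : lam * (mp * mp) ≤ (G.degree i : ℝ) * B := by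
    rw [← hsum]
    calc ∑ j ∈ G.neighborFinset i, phiP p (x i - x j) * φ
        ≤ ∑ _j ∈ G.neighborFinset i, B := Finset.sum_le_sum fun j _ => hterm j
      _ = (G.degree i : ℝ) * B := by
          rw [Finset.sum_const, nsmul_eq_mul, G.card_neighborFinset_eq_degree]
  constructor
  · have h1 : lam * (mp * mp) ≤ (2 ^ (p-1) * G.degree i) * (mp * mp) := by
      calc lam * (mp * mp) ≤ (G.degree i : ℝ) * B := hsum_le
        _ = (2 ^ (p-1) * G.degree i) * (mp * mp) := by rw [hB_def]; ring
    exact le_of_mul_le_mul_right h1 (by positivity)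
  · intro d hdle heq
    have hdeg_le : ((G.degree i : ℝ)) ≤ (d : ℝ) := by exact_mod_cast hdle
    have hsum' : ∑ j ∈ G.neighborFinset i, phiP p (x i - x j) * φ = (d : ℝ) * B := by
      rw [hsum, heq, hB_def]; ring
    have hdeq : G.degree i = d := by
      have h1 : (d : ℝ) * B ≤ (G.degree i : ℝ) * B := by
        rw [← hsum', hsum]; exact hsum_le
      have := le_of_mul_le_mul_right h1 hB
      exact le_antisymm hdle (by exact_mod_cast this)
    refine ⟨hdeq, ?_⟩
    -- all terms equal B
    have hall : ∀ j ∈ G.neighborFinset i, phiP p (x i - x j) * φ = B := by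
      by_contra hcon
      push_neg at hcon
      obtain ⟨j, hj, hjne⟩ := hcon
      have hlt : ∑ j ∈ G.neighborFinset i, phiP p (x i - x j) * φ
          < ∑ _j ∈ G.neighborFinset i, B :=
        Finset.sum_lt_sum (fun k _ => hterm k) ⟨j, hj, lt_of_le_of_ne (hterm j) hjne⟩
      rw [Finset.sum_const, nsmul_eq_mul, G.card_neighborFinset_eq_degree, hdeq, hsum'] at hlt
      exact lt_irrefl _ hlt
    intro j hj
    have htj := hall j hj
    have habs : |x i - x j| ≤ 2 * m := by
      have h1 := abs_sub (x i) (x j)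
      have h2 := hmax j
      linarith
    have hge : (2*m) ^ (p-1) * mp ≤ |x i - x j| ^ (p-1) * mp := by
      calc (2*m) ^ (p-1) * mp = B := by rw [h2m, hB_def]; ring
        _ = phiP p (x i - x j) * φ := htj.symm
        _ ≤ |phiP p (x i - x j) * φ| := le_abs_self _
        _ = |x i - x j| ^ (p-1) * mp := by rw [abs_mul, abs_phiP hp, hφabs]
    have heqabs : |x i - x j| = 2 * m := by
      by_contra hne2
      have hlt : |x i - x j| < 2 * m := lt_of_le_of_ne habs hne2
      have := Real.rpow_lt_rpow (abs_nonneg _) hlt hp1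
      have h3 := le_of_mul_le_mul_right hge hmp
      linarith
    have hi2 : (x i)^2 = m^2 := by rw [← sq_abs]
    have hj2 : (x j)^2 ≤ m^2 := by
      have h2 := hmax j
      nlinarith [sq_abs (x j), abs_nonneg (x j)]
    have hs2 : (x i - x j)^2 = 4 * m^2 := by
      rw [← sq_abs, heqabs]; ring
    have hexp : (x i + x j)^2 = 2*(x i)^2 + 2*(x j)^2 - (x i - x j)^2 := by ring
    have h0 : (x i + x j)^2 ≤ 0 := by rw [hexp, hi2, hs2]; linarith
    have := sq_eq_zero_iff.mp (le_antisymm h0 (sq_nonneg _))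
    linarith

lemma phiP_two_mul {p : ℝ} (hp : 1 < p) (t : ℝ) :
    phiP p (2 * t) = 2 ^ (p - 1) * phiP p t := by
  unfold phiP
  rw [abs_mul, abs_two, Real.mul_rpow (by norm_num) (abs_nonneg t),
    show p - 1 = (p-2) + 1 by ring, Real.rpow_add_one (by norm_num : (2:ℝ) ≠ 0)]
  ring

/-- Every eigenvalue `λ` of the graph `p`-Laplacian satisfies `λ ≤ 2^{p-1} d`,
where `d` is the maximum degree; moreover `2^{p-1} d` is an eigenvalue if and
only if `G` has a bipartite `d`-regular connected component (in particular one
containing a vertex realizing the maximum degree `d`). -/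
theorem pLap_eigenvalue_le_and_eq_iff {V : Type*} [Fintype V] [DecidableEq V]
    (G : SimpleGraph V) [DecidableRel G.Adj] (p : ℝ) (hp : 1 < p)
    (d : ℕ) (hd : d = G.maxDegree) :
    (∀ (lam : ℝ) (x : V → ℝ), IsPLapEigenpair G p lam x →
      lam ≤ 2 ^ (p - 1) * (d : ℝ)) ∧
    ((∃ x : V → ℝ, IsPLapEigenpair G p (2 ^ (p - 1) * (d : ℝ)) x) ↔
      ∃ c : G.ConnectedComponent,
        (∃ A : Set V, ∀ u v : V, u ∈ c.supp → v ∈ c.supp → G.Adj u v →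
          (u ∈ A ↔ v ∉ A)) ∧
        (∀ v ∈ c.supp, G.degree v = d) ∧
        (∃ v ∈ c.supp, G.degree v = G.maxDegree)) := by

  classical
  have h2pos : (0:ℝ) < 2 ^ (p-1) := Real.rpow_pos_of_pos two_pos _
  constructor
  · rintro lam x ⟨hx0, hx⟩
    obtain ⟨v0, hv0⟩ := Function.ne_iff.mp hx0
    obtain ⟨i, _, hi⟩ := Finset.exists_max_image Finset.univ (fun v => |x v|)
      ⟨v0, Finset.mem_univ v0⟩
    have hmax : ∀ v, |x v| ≤ |x i| := fun v => hi v (Finset.mem_univ v)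
    have hne : x i ≠ 0 := by
      intro h
      have := hmax v0
      rw [h] at this
      simp at this
      exact hv0 this
    have h1 := (pLap_core G hp hx i hmax hne).1
    refine h1.trans ?_
    have : (G.degree i : ℝ) ≤ (d : ℝ) := by
      exact_mod_cast hd ▸ G.degree_le_maxDegree i
    nlinarith
  · constructor
    · rintro ⟨x, hx0, hx⟩
      obtain ⟨v0, hv0⟩ := Function.ne_iff.mp hx0
      obtain ⟨i0, _, hi0m⟩ := Finset.exists_max_image Finset.univ (fun v => |x v|)
        ⟨v0, Finset.mem_univ v0⟩
      have hmax : ∀ v, |x v| ≤ |x i0| := fun v => hi0m v (Finset.mem_univ v)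
      have hne0 : x i0 ≠ 0 := by
        intro h
        have := hmax v0
        rw [h] at this
        simp at this
        exact hv0 this
      have key : ∀ v, |x v| = |x i0| →
          G.degree v = d ∧ ∀ j ∈ G.neighborFinset v, x j = - x v := by
        intro v hv
        have hmv : ∀ w, |x w| ≤ |x v| := by rw [hv]; exact hmax
        have hvne : x v ≠ 0 := by
          intro h
          rw [h, abs_zero] at hv
          exact hne0 (abs_eq_zero.mp hv.symm)
        exact (pLap_core G hp hx v hmv hvne).2 d (hd ▸ G.degree_le_maxDegree v) rfl
      have aux : ∀ (u v : V) (w : G.Walk u v), |x u| = |x i0| → |x v| = |x i0| := by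
        intro u v w
        induction w with
        | nil => exact id
        | cons hab w ih =>
          intro ha
          apply ih
          rw [(key _ ha).2 _ ((G.mem_neighborFinset _ _).mpr hab), abs_neg]
          exact ha
      have hcomp : ∀ v ∈ (G.connectedComponentMk i0).supp, |x v| = |x i0| := by
        intro v hv
        rw [SimpleGraph.ConnectedComponent.mem_supp_iff] at hv
        obtain ⟨w⟩ := (SimpleGraph.ConnectedComponent.eq.mp hv).symm
        exact aux i0 v w rfl
      refine ⟨G.connectedComponentMk i0, ⟨{v | 0 < x v}, ?_⟩, ?_, i0, ?_, ?_⟩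
      · intro u v hu hv hadj
        have hxu := hcomp u hu
        have hflip := (key u hxu).2 v ((G.mem_neighborFinset _ _).mpr hadj)
        have hune : x u ≠ 0 := by
          intro h
          rw [h, abs_zero] at hxu
          exact hne0 (abs_eq_zero.mp hxu.symm)
        simp only [Set.mem_setOf_eq, hflip]
        constructor
        · intro h h2; linarith
        · intro h
          rcases hune.lt_or_gt with h1 | h1
          · exact absurd (by linarith : 0 < -x u) h
          · exact h1
      · intro v hv
        exact (key v (hcomp v hv)).1
      · rw [SimpleGraph.ConnectedComponent.mem_supp_iff]
      · rw [(key i0 rfl).1, hd]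
    · rintro ⟨c, ⟨A, hA⟩, hdeg, -⟩
      set x : V → ℝ := fun v => if v ∈ c.supp then (if v ∈ A then 1 else -1) else 0
        with hx_def
      have hsuppval : ∀ v ∈ c.supp, x v = 1 ∨ x v = -1 := by
        intro v hv
        have : x v = if v ∈ c.supp then (if v ∈ A then (1:ℝ) else -1) else 0 := rfl
        rw [this, if_pos hv]
        by_cases hA' : v ∈ A
        · left; rw [if_pos hA']
        · right; rw [if_neg hA']
      have hadj_supp : ∀ {u v : V}, u ∈ c.supp → G.Adj u v → v ∈ c.supp := by
        intro u v hu hadj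
        rw [SimpleGraph.ConnectedComponent.mem_supp_iff] at hu ⊢
        rw [← hu]
        exact SimpleGraph.ConnectedComponent.eq.mpr hadj.symm.reachable
      refine ⟨x, ?_, ?_⟩
      · obtain ⟨v, hv⟩ := c.exists_rep
        have hvs : v ∈ c.supp := by rwa [SimpleGraph.ConnectedComponent.mem_supp_iff]
        intro h
        rcases hsuppval v hvs with h1 | h1 <;>
          · rw [show x v = 0 from congrFun h v] at h1; norm_num at h1
      · intro i
        by_cases hi : i ∈ c.supp
        · have hnb : ∀ j ∈ G.neighborFinset i, x j = - x i := by
            intro j hj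
            have hadj := (G.mem_neighborFinset _ _).mp hj
            have hjs : j ∈ c.supp := hadj_supp hi hadj
            have hflip := hA i j hi hjs hadj
            have hxj : x j = if j ∈ c.supp then (if j ∈ A then (1:ℝ) else -1) else 0 := rfl
            have hxi : x i = if i ∈ c.supp then (if i ∈ A then (1:ℝ) else -1) else 0 := rfl
            rw [hxj, hxi, if_pos hjs, if_pos hi]
            by_cases hiA : i ∈ A
            · have hjA : j ∉ A := hflip.mp hiA
              rw [if_pos hiA, if_neg hjA]
            · have hjA : j ∈ A := by by_contra h; exact hiA (hflip.mpr h)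
              rw [if_neg hiA, if_pos hjA]; norm_num
          calc ∑ j ∈ G.neighborFinset i, phiP p (x i - x j)
              = ∑ _j ∈ G.neighborFinset i, 2 ^ (p-1) * phiP p (x i) := by
                refine Finset.sum_congr rfl fun j hj => ?_
                rw [hnb j hj, sub_neg_eq_add, show x i + x i = 2 * x i by ring,
                  phiP_two_mul hp]
            _ = (G.degree i : ℝ) * (2 ^ (p-1) * phiP p (x i)) := by
                rw [Finset.sum_const, nsmul_eq_mul, G.card_neighborFinset_eq_degree]
            _ = 2 ^ (p - 1) * (d:ℝ) * phiP p (x i) := by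
                rw [hdeg i hi]; ring
        · have hxi : x i = 0 := by
            have : x i = if i ∈ c.supp then (if i ∈ A then (1:ℝ) else -1) else 0 := rfl
            rw [this, if_neg hi]
          have hnb : ∀ j ∈ G.neighborFinset i, x j = 0 := by
            intro j hj
            have hadj := (G.mem_neighborFinset _ _).mp hj
            have hjs : j ∉ c.supp := fun h => hi (hadj_supp h hadj.symm)
            have : x j = if j ∈ c.supp then (if j ∈ A then (1:ℝ) else -1) else 0 := rfl
            rw [this, if_neg hjs]
          rw [hxi]
          have : ∀ j ∈ G.neighborFinset i, phiP p (0 - x j) = 0 := by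
            intro j hj
            rw [hnb j hj]
            simp [phiP]
          rw [Finset.sum_congr rfl this, Finset.sum_const, smul_zero]
          simp [phiP]
end

section
/- Let p > 1 and let K_n be the complete graph on n ≥ 2 vertices. A nonzero real number λ is an eigenvalue of the graph p-Laplacian L_p of K_n if and only if there exist positive integers α and β with α + β ≤ n such that λ = n − α − β + (α^{1/(p−1)} + β^{1/(p−1)})^{p−1}. -/
open Finset

section PhiLemmas

variable {p : ℝ}

lemma phiP_zero (p : ℝ) : phiP p 0 = 0 := by simp [phiP]

lemma phiP_of_nonneg (hp : 1 < p) {t : ℝ} (ht : 0 ≤ t) : phiP p t = t ^ (p - 1) := by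
  rcases eq_or_lt_of_le ht with h | h
  · rw [← h, phiP_zero, eq_comm, Real.zero_rpow (by linarith)]
  · have : t ^ (p - 1) = t ^ (p - 2) * t := by
      rw [show p - 1 = (p - 2) + 1 by ring, Real.rpow_add h, Real.rpow_one]
    rw [phiP, abs_of_pos h, this]

lemma phiP_neg (p t : ℝ) : phiP p (-t) = - phiP p t := by
  rw [phiP, phiP, abs_neg]; ring

lemma phiP_pos (hp : 1 < p) {t : ℝ} (ht : 0 < t) : 0 < phiP p t := by
  rw [phiP_of_nonneg hp ht.le]; exact Real.rpow_pos_of_pos ht _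

lemma phiP_neg_of_neg (hp : 1 < p) {t : ℝ} (ht : t < 0) : phiP p t < 0 := by
  have := phiP_pos hp (t := -t) (by linarith)
  rw [phiP_neg] at this; linarith

lemma phiP_mul (p s t : ℝ) : phiP p (s * t) = phiP p s * phiP p t := by
  rw [phiP, phiP, phiP, abs_mul, Real.mul_rpow (abs_nonneg s) (abs_nonneg t)]; ring

lemma phiP_one (hp : 1 < p) : phiP p 1 = 1 := by
  rw [phiP, abs_one, Real.one_rpow, one_mul]

lemma phiP_eq_zero_iff (hp : 1 < p) {t : ℝ} : phiP p t = 0 ↔ t = 0 := by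
  constructor
  · intro h
    rcases lt_trichotomy t 0 with h1 | h1 | h1
    · exact absurd h (ne_of_lt (phiP_neg_of_neg hp h1))
    · exact h1
    · exact absurd h (ne_of_gt (phiP_pos hp h1))
  · intro h; rw [h, phiP_zero]

end PhiLemmas

section Hmono

/-- The auxiliary function `s ↦ (s+1)^q - s^q`. -/
noncomputable def hAux (q s : ℝ) : ℝ := (s + 1) ^ q - s ^ q

lemma hAux_zero {q : ℝ} (hq : 0 < q) : hAux q 0 = 1 := by
  simp [hAux, Real.zero_rpow (ne_of_gt hq)]

lemma hAux_hasDerivAt (q : ℝ) {s : ℝ} (hs : 0 < s) :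
    HasDerivAt (fun s : ℝ => (s + 1) ^ q - s ^ q)
      (q * (s + 1) ^ (q - 1) - q * s ^ (q - 1)) s := by
  have h0 : HasDerivAt (fun s : ℝ => s + 1) 1 s := (hasDerivAt_id s).add_const 1
  have h1 : HasDerivAt (fun s : ℝ => (s + 1) ^ q) (q * (s + 1) ^ (q - 1)) s := by
    have := (Real.hasDerivAt_rpow_const (x := s + 1) (p := q)
      (Or.inl (by linarith))).comp s h0
    simpa [Function.comp_def] using this
  exact h1.sub (Real.hasDerivAt_rpow_const (Or.inl hs.ne'))

lemma hAux_continuousOn {q : ℝ} (hq : 0 < q) :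
    ContinuousOn (fun s : ℝ => (s + 1) ^ q - s ^ q) (Set.Ici 0) := by
  apply ContinuousOn.sub
  · apply ContinuousOn.rpow_const ((continuous_id.add continuous_const).continuousOn)
    intro s _; right; exact hq.le
  · apply ContinuousOn.rpow_const continuousOn_id
    intro s _; right; exact hq.le

lemma hAux_strictMonoOn {q : ℝ} (hq : 1 < q) :
    StrictMonoOn (hAux q) (Set.Ici 0) := by
  have : StrictMonoOn (fun s : ℝ => (s + 1) ^ q - s ^ q) (Set.Ici 0) := by
    apply strictMonoOn_of_deriv_pos (convex_Ici 0) (hAux_continuousOn (by linarith))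
    intro s hs
    rw [interior_Ici] at hs
    have hs' : (0 : ℝ) < s := hs
    rw [(hAux_hasDerivAt q hs').deriv]
    have h2 : s ^ (q - 1) < (s + 1) ^ (q - 1) :=
      Real.rpow_lt_rpow hs'.le (by linarith) (by linarith)
    nlinarith
  exact this

lemma hAux_strictAntiOn {q : ℝ} (hq0 : 0 < q) (hq : q < 1) :
    StrictAntiOn (hAux q) (Set.Ici 0) := by
  have : StrictAntiOn (fun s : ℝ => (s + 1) ^ q - s ^ q) (Set.Ici 0) := by
    apply strictAntiOn_of_deriv_neg (convex_Ici 0) (hAux_continuousOn hq0)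
    intro s hs
    rw [interior_Ici] at hs
    have hs' : (0 : ℝ) < s := hs
    rw [(hAux_hasDerivAt q hs').deriv]
    have key : (s + 1) ^ (q - 1) < s ^ (q - 1) := by
      have e1 : (s + 1) ^ (q - 1) = ((s + 1) ^ (1 - q))⁻¹ := by
        rw [show q - 1 = -(1 - q) by ring, Real.rpow_neg (by linarith)]
      have e2 : s ^ (q - 1) = (s ^ (1 - q))⁻¹ := by
        rw [show q - 1 = -(1 - q) by ring, Real.rpow_neg hs'.le]
      rw [e1, e2]
      have h3 : s ^ (1 - q) < (s + 1) ^ (1 - q) :=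
        Real.rpow_lt_rpow hs'.le (by linarith) (by linarith)
      have h4 : 0 < s ^ (1 - q) := Real.rpow_pos_of_pos hs' _
      exact inv_strictAnti₀ h4 h3
    nlinarith
  exact this

end Hmono

section GLemmas

/-- `g(u) = φ_p(u) - φ_p(u-1)`. -/
noncomputable def gP (p u : ℝ) : ℝ := phiP p u - phiP p (u - 1)

variable {p : ℝ}

lemma gP_of_nonpos (hp : 1 < p) {u : ℝ} (hu : u ≤ 0) : gP p u = hAux (p - 1) (-u) := by
  have h1 : phiP p u = -((-u) ^ (p - 1)) := by
    rw [← neg_neg u, phiP_neg, phiP_of_nonneg hp (by linarith), neg_neg]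
  have h2 : phiP p (u - 1) = -((-u + 1) ^ (p - 1)) := by
    rw [show u - 1 = -(-u + 1) by ring, phiP_neg, phiP_of_nonneg hp (by linarith)]
  rw [gP, h1, h2, hAux]; ring

lemma gP_of_one_le (hp : 1 < p) {u : ℝ} (hu : 1 ≤ u) : gP p u = hAux (p - 1) (u - 1) := by
  have h1 : phiP p u = ((u - 1) + 1) ^ (p - 1) := by
    rw [phiP_of_nonneg hp (by linarith)]; ring_nf
  have h2 : phiP p (u - 1) = (u - 1) ^ (p - 1) := phiP_of_nonneg hp (by linarith)
  rw [gP, h1, h2, hAux]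

lemma gP_of_unit (hp : 1 < p) {u : ℝ} (hu0 : 0 ≤ u) (hu1 : u ≤ 1) :
    gP p u = u ^ (p - 1) + (1 - u) ^ (p - 1) := by
  have h2 : phiP p (u - 1) = -((1 - u) ^ (p - 1)) := by
    rw [show u - 1 = -(1 - u) by ring, phiP_neg, phiP_of_nonneg hp (by linarith)]
  rw [gP, h2, phiP_of_nonneg hp hu0]; ring

lemma gP_one (hp : 1 < p) : gP p 1 = 1 := by
  rw [gP, phiP_one hp, sub_self, phiP_zero, sub_zero]

/-- Key termwise inequality, case `p > 2`: strict version. -/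
lemma term_lt_hi (hp2 : 2 < p) {a b x : ℝ} (ha : 0 < a) (hab : a < b)
    (hx : x ≤ 0 ∨ a ≤ x) (hx0 : x ≠ 0) : gP p (x / b) < gP p (x / a) := by
  have hp : 1 < p := by linarith
  have hb : 0 < b := lt_trans ha hab
  have hq1 : 1 < p - 1 := by linarith
  rcases hx with hx | hx
  · have hxneg : x < 0 := lt_of_le_of_ne hx hx0
    have h1 : x / a < x / b := by
      rw [div_lt_div_iff₀ ha hb]; nlinarith
    have h2 : x / b < 0 := div_neg_of_neg_of_pos hxneg hb
    rw [gP_of_nonpos hp h2.le, gP_of_nonpos hp (by linarith : x / a ≤ 0)]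
    exact hAux_strictMonoOn hq1 (Set.mem_Ici.mpr (by linarith)) (Set.mem_Ici.mpr (by linarith))
      (by linarith)
  · have hxpos : 0 < x := lt_of_lt_of_le ha hx
    have hu1 : 1 ≤ x / a := (one_le_div ha).mpr hx
    have hu2pos : 0 < x / b := div_pos hxpos hb
    have hu21 : x / b < x / a := by
      rw [div_lt_div_iff₀ hb ha]; nlinarith
    rcases le_or_gt 1 (x / b) with hcase | hcase
    · rw [gP_of_one_le hp hcase, gP_of_one_le hp hu1]
      exact hAux_strictMonoOn hq1 (Set.mem_Ici.mpr (by linarith)) (Set.mem_Ici.mpr (by linarith))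
        (by linarith)
    · have hlt1 : gP p (x / b) < 1 := by
        rw [gP_of_unit hp hu2pos.le hcase.le]
        have e1 : (x / b) ^ (p - 1) < x / b := by
          calc (x / b) ^ (p - 1) < (x / b) ^ (1 : ℝ) :=
                Real.rpow_lt_rpow_of_exponent_gt hu2pos hcase (by linarith)
            _ = x / b := Real.rpow_one _
        rcases eq_or_lt_of_le hu2pos.le with h0 | h0
        · exact absurd h0.symm (ne_of_gt hu2pos)
        · rcases eq_or_lt_of_le hcase.le with h1 | h1
          · nlinarith [e1]
          · have e2 : (1 - x / b) ^ (p - 1) < 1 - x / b := by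
              calc (1 - x / b) ^ (p - 1) < (1 - x / b) ^ (1 : ℝ) :=
                    Real.rpow_lt_rpow_of_exponent_gt (by linarith) (by linarith) (by linarith)
                _ = 1 - x / b := Real.rpow_one _
            linarith
      have hge1 : 1 ≤ gP p (x / a) := by
        rcases eq_or_lt_of_le hu1 with h1 | h1
        · rw [← h1, gP_one hp]
        · rw [gP_of_one_le hp h1.le]
          have := hAux_strictMonoOn hq1 (Set.mem_Ici.mpr (le_refl (0:ℝ)))
            (Set.mem_Ici.mpr (by linarith : (0:ℝ) ≤ x / a - 1)) (by linarith)
          rw [hAux_zero (by linarith : (0:ℝ) < p - 1)] at this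
          linarith
      linarith

/-- Key termwise inequality, case `p > 2`: non-strict version (allows `x = 0`). -/
lemma term_le_hi (hp2 : 2 < p) {a b x : ℝ} (ha : 0 < a) (hab : a < b)
    (hx : x ≤ 0 ∨ a ≤ x) : gP p (x / b) ≤ gP p (x / a) := by
  rcases eq_or_ne x 0 with h | h
  · rw [h, zero_div, zero_div]
  · exact (term_lt_hi hp2 ha hab hx h).le

/-- Key termwise inequality, case `1 < p < 2`: strict version. -/
lemma term_lt_lo (hp : 1 < p) (hp2 : p < 2) {a b x : ℝ} (ha : 0 < a) (hab : a < b)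
    (hx : x ≤ 0 ∨ a ≤ x) (hx0 : x ≠ 0) : gP p (x / a) < gP p (x / b) := by
  have hb : 0 < b := lt_trans ha hab
  have hq0 : 0 < p - 1 := by linarith
  have hq1 : p - 1 < 1 := by linarith
  rcases hx with hx | hx
  · have hxneg : x < 0 := lt_of_le_of_ne hx hx0
    have h1 : x / a < x / b := by
      rw [div_lt_div_iff₀ ha hb]; nlinarith
    have h2 : x / b < 0 := div_neg_of_neg_of_pos hxneg hb
    rw [gP_of_nonpos hp h2.le, gP_of_nonpos hp (by linarith : x / a ≤ 0)]
    exact hAux_strictAntiOn hq0 hq1 (Set.mem_Ici.mpr (by linarith))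
      (Set.mem_Ici.mpr (by linarith)) (by linarith)
  · have hxpos : 0 < x := lt_of_lt_of_le ha hx
    have hu1 : 1 ≤ x / a := (one_le_div ha).mpr hx
    have hu2pos : 0 < x / b := div_pos hxpos hb
    have hu21 : x / b < x / a := by
      rw [div_lt_div_iff₀ hb ha]; nlinarith
    rcases le_or_gt 1 (x / b) with hcase | hcase
    · rw [gP_of_one_le hp hcase, gP_of_one_le hp hu1]
      exact hAux_strictAntiOn hq0 hq1 (Set.mem_Ici.mpr (by linarith))
        (Set.mem_Ici.mpr (by linarith)) (by linarith)
    · have hgt1 : 1 < gP p (x / b) := by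
        rw [gP_of_unit hp hu2pos.le hcase.le]
        have e1 : x / b < (x / b) ^ (p - 1) := by
          calc x / b = (x / b) ^ (1 : ℝ) := (Real.rpow_one _).symm
            _ < (x / b) ^ (p - 1) :=
                Real.rpow_lt_rpow_of_exponent_gt hu2pos hcase (by linarith)
        have e2 : 0 ≤ (1 - x / b) ^ (p - 1) := Real.rpow_nonneg (by linarith) _
        rcases eq_or_lt_of_le hcase.le with h1 | h1
        · linarith
        · have e3 : 1 - x / b < (1 - x / b) ^ (p - 1) := by
            calc 1 - x / b = (1 - x / b) ^ (1 : ℝ) := (Real.rpow_one _).symm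
              _ < (1 - x / b) ^ (p - 1) :=
                  Real.rpow_lt_rpow_of_exponent_gt (by linarith) (by linarith) (by linarith)
          linarith
      have hle1 : gP p (x / a) ≤ 1 := by
        rcases eq_or_lt_of_le hu1 with h1 | h1
        · rw [← h1, gP_one hp]
        · rw [gP_of_one_le hp h1.le]
          have := hAux_strictAntiOn hq0 hq1 (Set.mem_Ici.mpr (le_refl (0:ℝ)))
            (Set.mem_Ici.mpr (by linarith : (0:ℝ) ≤ x / a - 1)) (by linarith)
          rw [hAux_zero hq0] at this
          linarith
      linarith

/-- Key termwise inequality, case `1 < p < 2`: non-strict version. -/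
lemma term_le_lo (hp : 1 < p) (hp2 : p < 2) {a b x : ℝ} (ha : 0 < a) (hab : a < b)
    (hx : x ≤ 0 ∨ a ≤ x) : gP p (x / a) ≤ gP p (x / b) := by
  rcases eq_or_ne x 0 with h | h
  · rw [h, zero_div, zero_div]
  · exact (term_lt_lo hp hp2 ha hab hx h).le

end GLemmas

section EigenLemmas

variable {p lam : ℝ} {n : ℕ} {x : Fin n → ℝ}

lemma neighborFinset_top (i : Fin n) :
    (⊤ : SimpleGraph (Fin n)).neighborFinset i = univ.erase i := by
  ext j
  simp [SimpleGraph.mem_neighborFinset, Finset.mem_erase, ne_comm]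

lemma eigen_sum_univ (h : IsPLapEigenpair (⊤ : SimpleGraph (Fin n)) p lam x) (i : Fin n) :
    ∑ j : Fin n, phiP p (x i - x j) = lam * phiP p (x i) := by
  have h2 := h.2 i
  rw [neighborFinset_top i, Finset.sum_erase _ (by simp [phiP])] at h2
  exact h2

lemma eigen_zsum (hlam : lam ≠ 0)
    (h : IsPLapEigenpair (⊤ : SimpleGraph (Fin n)) p lam x) :
    ∑ j : Fin n, phiP p (x j) = 0 := by
  have hS : ∑ i : Fin n, ∑ j : Fin n, phiP p (x i - x j)
      = lam * ∑ i : Fin n, phiP p (x i) := by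
    rw [Finset.mul_sum]
    exact Finset.sum_congr rfl fun i _ => eigen_sum_univ h i
  have hanti : (∑ i : Fin n, ∑ j : Fin n, phiP p (x i - x j))
      + (∑ i : Fin n, ∑ j : Fin n, phiP p (x j - x i)) = 0 := by
    rw [← Finset.sum_add_distrib]
    apply Finset.sum_eq_zero; intro i _
    rw [← Finset.sum_add_distrib]
    apply Finset.sum_eq_zero; intro j _
    rw [show x j - x i = -(x i - x j) by ring, phiP_neg]; ring
  have hcomm : ∑ i : Fin n, ∑ j : Fin n, phiP p (x j - x i)
      = ∑ i : Fin n, ∑ j : Fin n, phiP p (x i - x j) := Finset.sum_comm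
  have h0 : ∑ i : Fin n, ∑ j : Fin n, phiP p (x i - x j) = 0 := by
    rw [hcomm] at hanti; linarith
  rw [h0] at hS
  rcases mul_eq_zero.mp hS.symm with h | h
  · exact absurd h hlam
  · exact h

lemma eigen_neg (h : IsPLapEigenpair (⊤ : SimpleGraph (Fin n)) p lam x) :
    IsPLapEigenpair (⊤ : SimpleGraph (Fin n)) p lam (-x) := by
  refine ⟨neg_ne_zero.mpr h.1, fun i => ?_⟩
  have h2 := h.2 i
  calc ∑ j ∈ (⊤ : SimpleGraph (Fin n)).neighborFinset i, phiP p ((-x) i - (-x) j)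
      = ∑ j ∈ (⊤ : SimpleGraph (Fin n)).neighborFinset i, -phiP p (x i - x j) := by
        apply Finset.sum_congr rfl
        intro j _
        rw [show (-x) i - (-x) j = -(x i - x j) by simp; ring, phiP_neg]
    _ = -(lam * phiP p (x i)) := by rw [Finset.sum_neg_distrib, h2]
    _ = lam * phiP p ((-x) i) := by rw [Pi.neg_apply, phiP_neg]; ring

lemma eigen_exists_pos (hp : 1 < p) (hlam : lam ≠ 0)
    (h : IsPLapEigenpair (⊤ : SimpleGraph (Fin n)) p lam x) :
    ∃ i, 0 < x i := by
  by_contra hcon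
  push_neg at hcon
  have hzs := eigen_zsum hlam h
  have hall : ∀ i ∈ (univ : Finset (Fin n)), phiP p (x i) = 0 := by
    rw [← Finset.sum_eq_zero_iff_of_nonpos]
    · exact hzs
    · intro i _
      rcases lt_or_eq_of_le (hcon i) with h1 | h1
      · exact (phiP_neg_of_neg hp h1).le
      · rw [h1, phiP_zero]
  apply h.1
  funext i
  have := hall i (mem_univ i)
  exact (phiP_eq_zero_iff hp).mp this

lemma eigen_exists_neg (hp : 1 < p) (hlam : lam ≠ 0)
    (h : IsPLapEigenpair (⊤ : SimpleGraph (Fin n)) p lam x) :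
    ∃ i, x i < 0 := by
  obtain ⟨i, hi⟩ := eigen_exists_pos hp hlam (eigen_neg h)
  exact ⟨i, by simpa using hi⟩

end EigenLemmas

section Constancy

variable {p lam : ℝ} {n : ℕ} {x : Fin n → ℝ}

lemma eigen_gP_sum (hp : 1 < p)
    (h : IsPLapEigenpair (⊤ : SimpleGraph (Fin n)) p lam x)
    (hzs : ∑ j : Fin n, phiP p (x j) = 0)
    {t : ℝ} (ht : 0 < t) (k0 : Fin n) (hk0 : x k0 = t) :
    ∑ k : Fin n, gP p (x k / t) = lam := by
  unfold gP
  rw [Finset.sum_sub_distrib]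
  have h1 : ∑ k : Fin n, phiP p (x k / t) = 0 := by
    calc ∑ k : Fin n, phiP p (x k / t)
        = ∑ k : Fin n, phiP p (x k) * phiP p t⁻¹ := by
          apply Finset.sum_congr rfl
          intro k _
          rw [div_eq_mul_inv, phiP_mul]
      _ = (∑ k : Fin n, phiP p (x k)) * phiP p t⁻¹ := (Finset.sum_mul _ _ _).symm
      _ = 0 := by rw [hzs, zero_mul]
  have h2 : ∑ k : Fin n, phiP p (x k / t - 1) = -lam := by
    have heig : ∑ j : Fin n, phiP p (t - x j) = lam * phiP p t := by
      have := eigen_sum_univ h k0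
      rwa [hk0] at this
    calc ∑ k : Fin n, phiP p (x k / t - 1)
        = ∑ k : Fin n, -(phiP p (t - x k) * phiP p t⁻¹) := by
          apply Finset.sum_congr rfl
          intro k _
          rw [show x k / t - 1 = -((t - x k) * t⁻¹) by field_simp; ring, phiP_neg, phiP_mul]
      _ = -((∑ k : Fin n, phiP p (t - x k)) * phiP p t⁻¹) := by
          rw [Finset.sum_neg_distrib, Finset.sum_mul]
      _ = -(lam * (phiP p t * phiP p t⁻¹)) := by rw [heig]; ring
      _ = -lam := by
          rw [← phiP_mul, mul_inv_cancel₀ (ne_of_gt ht), phiP_one hp, mul_one]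
  rw [h1, h2]; ring

lemma pos_value_unique (hp : 1 < p) (hp2 : p ≠ 2) (hlam : lam ≠ 0)
    (h : IsPLapEigenpair (⊤ : SimpleGraph (Fin n)) p lam x) :
    ∀ i j, 0 < x i → 0 < x j → x i = x j := by
  intro i j hi hj
  by_contra hne
  have hzs := eigen_zsum hlam h
  set F : Finset ℝ := (univ.image x).filter (fun t => 0 < t) with hF
  have hmemF : ∀ k : Fin n, 0 < x k → x k ∈ F := by
    intro k hk
    rw [hF, Finset.mem_filter]
    exact ⟨Finset.mem_image_of_mem x (mem_univ k), hk⟩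
  have hiF : x i ∈ F := hmemF i hi
  have hjF : x j ∈ F := hmemF j hj
  have hFne : F.Nonempty := ⟨_, hiF⟩
  set a := F.min' hFne with ha_def
  have haF : a ∈ F := F.min'_mem hFne
  have ha_pos : 0 < a := (Finset.mem_filter.mp haF).2
  obtain ⟨i0, _, hi0⟩ := Finset.mem_image.mp (Finset.mem_filter.mp haF).1
  have hex : ∃ b ∈ F, a < b := by
    rcases eq_or_ne (x i) a with h1 | h1
    · refine ⟨x j, hjF, lt_of_le_of_ne (F.min'_le _ hjF) ?_⟩
      rw [← h1]; exact hne
    · exact ⟨x i, hiF, lt_of_le_of_ne (F.min'_le _ hiF) (Ne.symm h1)⟩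
  obtain ⟨b, hbF, hab⟩ := hex
  obtain ⟨j0, _, hj0⟩ := Finset.mem_image.mp (Finset.mem_filter.mp hbF).1
  have hb_pos : 0 < b := lt_trans ha_pos hab
  have hdom : ∀ k, x k ≤ 0 ∨ a ≤ x k := by
    intro k
    by_cases hk : 0 < x k
    · exact Or.inr (F.min'_le _ (hmemF k hk))
    · exact Or.inl (not_lt.mp hk)
  have Sa : ∑ k : Fin n, gP p (x k / a) = lam := eigen_gP_sum hp h hzs ha_pos i0 hi0
  have Sb : ∑ k : Fin n, gP p (x k / b) = lam := eigen_gP_sum hp h hzs hb_pos j0 hj0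
  have hsum0 : ∑ k : Fin n, (gP p (x k / a) - gP p (x k / b)) = 0 := by
    rw [Finset.sum_sub_distrib, Sa, Sb, sub_self]
  rcases lt_or_gt_of_ne hp2 with hplt | hpgt
  · -- p < 2 : each term ≤ 0, term at i0 < 0
    have hlt : ∑ k : Fin n, (gP p (x k / a) - gP p (x k / b)) < ∑ _k : Fin n, (0 : ℝ) := by
      apply Finset.sum_lt_sum
      · intro k _
        exact sub_nonpos.mpr (term_le_lo hp hplt ha_pos hab (hdom k))
      · refine ⟨i0, mem_univ _, ?_⟩
        have := term_lt_lo hp hplt ha_pos hab (hdom i0) (by rw [hi0]; exact ne_of_gt ha_pos)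
        linarith
    rw [Finset.sum_const_zero] at hlt
    linarith
  · -- p > 2 : each term ≥ 0, term at i0 > 0
    have hlt : ∑ _k : Fin n, (0 : ℝ) < ∑ k : Fin n, (gP p (x k / a) - gP p (x k / b)) := by
      apply Finset.sum_lt_sum
      · intro k _
        exact sub_nonneg.mpr (term_le_hi hpgt ha_pos hab (hdom k))
      · refine ⟨i0, mem_univ _, ?_⟩
        have := term_lt_hi hpgt ha_pos hab (hdom i0) (by rw [hi0]; exact ne_of_gt ha_pos)
        linarith
    rw [Finset.sum_const_zero] at hlt
    linarith

end Constancy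

section Counting

lemma sum_classify {n α β : ℕ} (hab : α + β ≤ n) (va vb : ℝ) (f : ℝ → ℝ) :
    (∑ j : Fin n, f (if (j : ℕ) < α then va else if (j : ℕ) < α + β then vb else 0))
      = (α : ℝ) * f va + (β : ℝ) * f vb + ((n : ℝ) - α - β) * f 0 := by
  rw [Fin.sum_univ_eq_sum_range (fun k => f (if k < α then va else if k < α + β then vb else 0)) n]
  rw [Finset.range_eq_Ico,
    ← Finset.sum_Ico_consecutive _ (Nat.zero_le (α + β)) hab,
    ← Finset.sum_Ico_consecutive _ (Nat.zero_le α) (Nat.le_add_right α β)]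
  have e1 : ∑ k ∈ Finset.Ico 0 α,
      f (if k < α then va else if k < α + β then vb else 0) = (α : ℝ) * f va := by
    rw [Finset.sum_congr rfl (fun k hk => by
      rw [if_pos (Finset.mem_Ico.mp hk).2]), Finset.sum_const, Nat.card_Ico, Nat.sub_zero,
      nsmul_eq_mul]
  have e2 : ∑ k ∈ Finset.Ico α (α + β),
      f (if k < α then va else if k < α + β then vb else 0) = (β : ℝ) * f vb := by
    rw [Finset.sum_congr rfl (fun k hk => by
      rw [if_neg (not_lt.mpr (Finset.mem_Ico.mp hk).1), if_pos (Finset.mem_Ico.mp hk).2]),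
      Finset.sum_const, Nat.card_Ico, Nat.add_sub_cancel_left, nsmul_eq_mul]
  have e3 : ∑ k ∈ Finset.Ico (α + β) n,
      f (if k < α then va else if k < α + β then vb else 0) = ((n : ℝ) - α - β) * f 0 := by
    rw [Finset.sum_congr rfl (fun k hk => by
      have h1 := (Finset.mem_Ico.mp hk).1
      rw [if_neg (not_lt.mpr (le_trans (Nat.le_add_right α β) h1)), if_neg (not_lt.mpr h1)]),
      Finset.sum_const, Nat.card_Ico, nsmul_eq_mul]
    congr 1
    push_cast [Nat.cast_sub hab]
    ring
  rw [e1, e2, e3]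

end Counting

section Backward

lemma backward_direction (p : ℝ) (hp : 1 < p) (n : ℕ) (hn : 2 ≤ n) (lam : ℝ)
    (α β : ℕ) (hα : 0 < α) (hβ : 0 < β) (hab : α + β ≤ n)
    (hformula : lam = (n : ℝ) - (α : ℝ) - (β : ℝ) +
      ((α : ℝ) ^ (1 / (p - 1)) + (β : ℝ) ^ (1 / (p - 1))) ^ (p - 1)) :
    ∃ x : Fin n → ℝ, IsPLapEigenpair (⊤ : SimpleGraph (Fin n)) p lam x := by
  have hq : 0 < p - 1 := by linarith
  have hA0 : 0 < (α : ℝ) := by exact_mod_cast hα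
  have hB0 : 0 < (β : ℝ) := by exact_mod_cast hβ
  set va : ℝ := (β : ℝ) ^ (1 / (p - 1)) with hva
  set vb : ℝ := (α : ℝ) ^ (1 / (p - 1)) with hvb
  have hva0 : 0 < va := Real.rpow_pos_of_pos hB0 _
  have hvb0 : 0 < vb := Real.rpow_pos_of_pos hA0 _
  have hvaq : va ^ (p - 1) = (β : ℝ) := by
    rw [hva, ← Real.rpow_mul hB0.le, one_div, inv_mul_cancel₀ (ne_of_gt hq), Real.rpow_one]
  have hvbq : vb ^ (p - 1) = (α : ℝ) := by
    rw [hvb, ← Real.rpow_mul hA0.le, one_div, inv_mul_cancel₀ (ne_of_gt hq), Real.rpow_one]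
  refine ⟨fun j => if (j : ℕ) < α then va else if (j : ℕ) < α + β then -vb else 0, ?_, ?_⟩
  · intro hzero
    have h0n : 0 < n := by omega
    have h00 := congrFun hzero ⟨0, h0n⟩
    simp only at h00
    rw [if_pos (by simpa using hα)] at h00
    exact absurd h00 (ne_of_gt hva0)
  · intro i
    set x : Fin n → ℝ := fun j => if (j : ℕ) < α then va else if (j : ℕ) < α + β then -vb else 0
      with hx
    rw [neighborFinset_top i,
      Finset.sum_erase (f := fun j => phiP p (x i - x j)) univ (by simp [phiP])]
    have hEq : ∑ j : Fin n, phiP p (x i - x j)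
        = (α : ℝ) * phiP p (x i - va) + (β : ℝ) * phiP p (x i - -vb)
          + ((n : ℝ) - α - β) * phiP p (x i - 0) :=
      sum_classify hab va (-vb) (fun t => phiP p (x i - t))
    rw [hEq]
    set C : ℝ := (vb + va) ^ (p - 1) with hC
    have hlam' : lam = ((n : ℝ) - α - β) + C := by rw [hformula]
    have hphisum : phiP p (va + vb) = C := by
      rw [phiP_of_nonneg hp (by linarith), add_comm va vb]
    have hphiva : phiP p va = (β : ℝ) := by rw [phiP_of_nonneg hp hva0.le, hvaq]
    have hphivb : phiP p vb = (α : ℝ) := by rw [phiP_of_nonneg hp hvb0.le, hvbq]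
    rcases lt_or_ge ((i : ℕ)) α with hi | hi
    · have hxi : x i = va := by rw [hx]; simp only; rw [if_pos hi]
      rw [hxi, sub_self, phiP_zero, show va - -vb = va + vb by ring, sub_zero,
        hphisum, hphiva, hlam']
      ring
    · rcases lt_or_ge ((i : ℕ)) (α + β) with hi2 | hi2
      · have hxi : x i = -vb := by rw [hx]; simp only; rw [if_neg (not_lt.mpr hi), if_pos hi2]
        rw [hxi, show -vb - va = -(va + vb) by ring, phiP_neg, hphisum,
          show -vb - -vb = (0:ℝ) by ring, phiP_zero, sub_zero, phiP_neg, hphivb, hlam']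
        ring
      · have hxi : x i = 0 := by
          rw [hx]; simp only
          rw [if_neg (not_lt.mpr hi), if_neg (not_lt.mpr hi2)]
        rw [hxi, zero_sub, phiP_neg, hphiva, show (0:ℝ) - -vb = vb by ring, hphivb,
          sub_zero, phiP_zero]
        ring
end Backward

section Forward

lemma forward_direction (p : ℝ) (hp : 1 < p) (n : ℕ) (hn : 2 ≤ n) (lam : ℝ) (hlam : lam ≠ 0)
    {x : Fin n → ℝ} (h : IsPLapEigenpair (⊤ : SimpleGraph (Fin n)) p lam x) :
    ∃ α β : ℕ, 0 < α ∧ 0 < β ∧ α + β ≤ n ∧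
      lam = (n : ℝ) - (α : ℝ) - (β : ℝ) +
        ((α : ℝ) ^ (1 / (p - 1)) + (β : ℝ) ^ (1 / (p - 1))) ^ (p - 1) := by
  have hzs := eigen_zsum hlam h
  by_cases hp2 : p = 2
  · subst hp2
    have hphi : ∀ t : ℝ, phiP 2 t = t := by
      intro t
      rw [phiP, show (2:ℝ) - 2 = 0 by ring, Real.rpow_zero, one_mul]
    have hS : ∑ j : Fin n, x j = 0 := by
      have := hzs
      simp only [hphi] at this
      exact this
    obtain ⟨i, hi⟩ : ∃ i, x i ≠ 0 := by
      by_contra hc; push_neg at hc; exact h.1 (funext hc)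
    have heq := eigen_sum_univ h i
    simp only [hphi] at heq
    rw [Finset.sum_sub_distrib, Finset.sum_const, Finset.card_univ, Fintype.card_fin,
      hS, sub_zero, nsmul_eq_mul] at heq
    have hlamn : lam = (n : ℝ) := (mul_right_cancel₀ hi heq).symm
    refine ⟨1, 1, one_pos, one_pos, by omega, ?_⟩
    rw [hlamn]
    norm_num [Real.one_rpow]
    ring
  · obtain ⟨ip, hip⟩ := eigen_exists_pos hp hlam h
    obtain ⟨im, him⟩ := eigen_exists_neg hp hlam h
    set a := x ip with ha_def
    set e := -x im with he_def
    have ha : 0 < a := hip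
    have he : 0 < e := by rw [he_def]; linarith
    have hPval : ∀ k, 0 < x k → x k = a :=
      fun k hk => pos_value_unique hp hp2 hlam h k ip hk hip
    have hNval : ∀ k, x k < 0 → x k = -e := by
      intro k hk
      have hneg := eigen_neg h
      have h2 := pos_value_unique hp hp2 hlam hneg k im
        (by simpa using hk) (by simp only [Pi.neg_apply]; linarith)
      simp only [Pi.neg_apply] at h2
      rw [he_def]; linarith
    set P := univ.filter (fun k => 0 < x k) with hP
    set N := univ.filter (fun k => x k < 0) with hN
    set Z := univ.filter (fun k => x k = 0) with hZ
    set α := P.card with hαdef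
    set β := N.card with hβdef
    have hdisjPN : Disjoint P N := by
      rw [Finset.disjoint_left]
      intro k hk1 hk2
      rw [hP, Finset.mem_filter] at hk1
      rw [hN, Finset.mem_filter] at hk2
      linarith [hk1.2, hk2.2]
    have hdisjPNZ : Disjoint (P ∪ N) Z := by
      rw [Finset.disjoint_left]
      intro k hk1 hk2
      rw [hZ, Finset.mem_filter] at hk2
      rcases Finset.mem_union.mp hk1 with hk | hk
      · rw [hP, Finset.mem_filter] at hk; linarith [hk.2, hk2.2]
      · rw [hN, Finset.mem_filter] at hk; linarith [hk.2, hk2.2]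
    have hunion : (P ∪ N) ∪ Z = univ := by
      ext k
      simp only [Finset.mem_union, hP, hN, hZ, Finset.mem_filter, Finset.mem_univ, true_and,
        iff_true]
      rcases lt_trichotomy (x k) 0 with hh | hh | hh
      · exact Or.inl (Or.inr hh)
      · exact Or.inr hh
      · exact Or.inl (Or.inl hh)
    have hsplit : ∀ f : Fin n → ℝ,
        ∑ k : Fin n, f k = (∑ k ∈ P, f k) + (∑ k ∈ N, f k) + (∑ k ∈ Z, f k) := by
      intro f
      rw [← hunion, Finset.sum_union hdisjPNZ, Finset.sum_union hdisjPN]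
    have hcard : α + β + Z.card = n := by
      have h1 : (P ∪ N ∪ Z).card = (univ : Finset (Fin n)).card := by rw [hunion]
      rw [Finset.card_union_of_disjoint hdisjPNZ, Finset.card_union_of_disjoint hdisjPN,
        Finset.card_univ, Fintype.card_fin] at h1
      exact h1
    have hαpos : 0 < α := Finset.card_pos.mpr ⟨ip, by rw [hP, Finset.mem_filter]; exact ⟨mem_univ _, hip⟩⟩
    have hβpos : 0 < β := Finset.card_pos.mpr ⟨im, by rw [hN, Finset.mem_filter]; exact ⟨mem_univ _, him⟩⟩
    have habn : α + β ≤ n := by omega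
    refine ⟨α, β, hαpos, hβpos, habn, ?_⟩
    have hZcast : (Z.card : ℝ) = (n : ℝ) - α - β := by
      have : (α : ℝ) + β + Z.card = n := by exact_mod_cast hcard
      linarith
    -- zero-sum split
    have hzsum2 : (α : ℝ) * phiP p a + (β : ℝ) * phiP p (-e) = 0 := by
      have := hzs
      rw [hsplit (fun k => phiP p (x k))] at this
      have e1 : ∑ k ∈ P, phiP p (x k) = (α : ℝ) * phiP p a := by
        rw [Finset.sum_congr rfl (fun k hk => by
          rw [hPval k (Finset.mem_filter.mp hk).2]), Finset.sum_const, nsmul_eq_mul]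
      have e2 : ∑ k ∈ N, phiP p (x k) = (β : ℝ) * phiP p (-e) := by
        rw [Finset.sum_congr rfl (fun k hk => by
          rw [hNval k (Finset.mem_filter.mp hk).2]), Finset.sum_const, nsmul_eq_mul]
      have e3 : ∑ k ∈ Z, phiP p (x k) = 0 := by
        apply Finset.sum_eq_zero
        intro k hk
        rw [(Finset.mem_filter.mp hk).2, phiP_zero]
      rw [e1, e2, e3, add_zero] at this
      exact this
    -- eigen equation at ip split
    have heq2 : (β : ℝ) * phiP p (a + e) + ((n : ℝ) - α - β) * phiP p a = lam * phiP p a := by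
      have heig := eigen_sum_univ h ip
      rw [← ha_def] at heig
      rw [hsplit (fun k => phiP p (a - x k))] at heig
      have e1 : ∑ k ∈ P, phiP p (a - x k) = 0 := by
        apply Finset.sum_eq_zero
        intro k hk
        rw [hPval k (Finset.mem_filter.mp hk).2, sub_self, phiP_zero]
      have e2 : ∑ k ∈ N, phiP p (a - x k) = (β : ℝ) * phiP p (a + e) := by
        rw [Finset.sum_congr rfl (fun k hk => by
          rw [hNval k (Finset.mem_filter.mp hk).2, sub_neg_eq_add]), Finset.sum_const,
          nsmul_eq_mul]
      have e3 : ∑ k ∈ Z, phiP p (a - x k) = (Z.card : ℝ) * phiP p a := by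
        rw [Finset.sum_congr rfl (fun k hk => by
          rw [(Finset.mem_filter.mp hk).2, sub_zero]), Finset.sum_const, nsmul_eq_mul]
      rw [e1, e2, e3, zero_add, hZcast] at heig
      exact heig
    -- final algebra
    have hq : 0 < p - 1 := by linarith
    have hA0 : 0 < (α : ℝ) := by exact_mod_cast hαpos
    have hB0 : 0 < (β : ℝ) := by exact_mod_cast hβpos
    have hphia : phiP p a = a ^ (p - 1) := phiP_of_nonneg hp ha.le
    have hphie : phiP p (-e) = -(e ^ (p - 1)) := by
      rw [phiP_neg, phiP_of_nonneg hp he.le]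
    have hzsum3 : (α : ℝ) * a ^ (p - 1) = (β : ℝ) * e ^ (p - 1) := by
      rw [hphia, hphie] at hzsum2; linarith
    set u : ℝ := e / a with hu_def
    have hu : 0 < u := div_pos he ha
    have haq : 0 < a ^ (p - 1) := Real.rpow_pos_of_pos ha _
    have h1 : (α : ℝ) = (β : ℝ) * u ^ (p - 1) := by
      rw [hu_def, Real.div_rpow he.le ha.le]
      field_simp
      linarith [hzsum3]
    have h2 : (α : ℝ) ^ (1 / (p - 1)) = (β : ℝ) ^ (1 / (p - 1)) * u := by
      rw [h1, Real.mul_rpow hB0.le (Real.rpow_nonneg hu.le _)]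
      congr 1
      rw [← Real.rpow_mul hu.le, mul_one_div_cancel (ne_of_gt hq), Real.rpow_one]
    have h3 : ((α : ℝ) ^ (1 / (p - 1)) + (β : ℝ) ^ (1 / (p - 1))) ^ (p - 1)
        = (β : ℝ) * (1 + u) ^ (p - 1) := by
      rw [h2, show (β:ℝ) ^ (1/(p-1)) * u + (β:ℝ) ^ (1/(p-1))
          = (β:ℝ) ^ (1/(p-1)) * (1 + u) by ring,
        Real.mul_rpow (Real.rpow_nonneg hB0.le _) (by linarith),
        ← Real.rpow_mul hB0.le, one_div, inv_mul_cancel₀ (ne_of_gt hq), Real.rpow_one]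
    have h4 : a + e = a * (1 + u) := by
      rw [hu_def]; field_simp
    have h5 : phiP p (a + e) = a ^ (p - 1) * (1 + u) ^ (p - 1) := by
      rw [phiP_of_nonneg hp (by linarith), h4, Real.mul_rpow ha.le (by linarith)]
    rw [h5, hphia] at heq2
    have h6 : ((n : ℝ) - α - β + (β : ℝ) * (1 + u) ^ (p - 1)) * a ^ (p - 1)
        = lam * a ^ (p - 1) := by
      ring_nf
      ring_nf at heq2
      linarith [heq2]
    have hfin : lam = (n : ℝ) - α - β + (β : ℝ) * (1 + u) ^ (p - 1) :=
      (mul_right_cancel₀ (ne_of_gt haq) h6).symm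
    rw [hfin, h3]

end Forward


/-- The nonzero eigenvalues of the graph `p`-Laplacian of the complete graph `K_n`
(`n ≥ 2`) are exactly the numbers
`n − α − β + (α^{1/(p−1)} + β^{1/(p−1)})^{p−1}` with `α, β` positive integers,
`α + β ≤ n`. -/
theorem pLap_eigenvalues_complete_graph (p : ℝ) (hp : 1 < p) (n : ℕ) (hn : 2 ≤ n)
    (lam : ℝ) (hlam : lam ≠ 0) :
    (∃ x : Fin n → ℝ, IsPLapEigenpair (⊤ : SimpleGraph (Fin n)) p lam x) ↔
      ∃ α β : ℕ, 0 < α ∧ 0 < β ∧ α + β ≤ n ∧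
        lam = (n : ℝ) - (α : ℝ) - (β : ℝ) +
          ((α : ℝ) ^ (1 / (p - 1)) + (β : ℝ) ^ (1 / (p - 1))) ^ (p - 1) := by
  constructor
  · rintro ⟨x, hx⟩
    exact forward_direction p hp n hn lam hlam hx
  · rintro ⟨α, β, hα, hβ, hab, hform⟩
    exact backward_direction p hp n hn lam α β hα hβ hab hform
end
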